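/- arXiv:1404.5591 — 5 statements merged into one kernel-verified Lean document; each statement's English description precedes it below -/
import Mathlib

section
/- Let X and Y be independent exponential random variables with rates λ and μ. The random variable S = λX + μY is independent of the event [X<Y], and conditional on [X<Y], S is distributed as the sum of two independent exponential(1) random variables. -/
open MeasureTheory ProbabilityTheory

namespace WSIOE

open Real Set

lemma expMeasure_eq_withDensity (r : ℝ) :
    expMeasure r = MeasureTheory.volume.withDensity (exponentialPDF r) := rfl

lemma expMeasure_apply' {r : ℝ} {s : Set ℝ} (hs : MeasurableSet s) :
    expMeasure r s = ∫⁻ x in s, exponentialPDF r x := by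
  rw [expMeasure_eq_withDensity, withDensity_apply _ hs]

lemma expMeasure_Iic {r : ℝ} (hr : 0 < r) (x : ℝ) :
    expMeasure r (Iic x)
      = ENNReal.ofReal (if 0 ≤ x then 1 - rexp (-(r * x)) else 0) := by
  rw [expMeasure_apply' measurableSet_Iic, lintegral_exponentialPDF_eq_antiDeriv hr]

lemma expMeasure_Ioc {r : ℝ} (hr : 0 < r) {a : ℝ} (ha : 0 ≤ a) (b : ℝ) :
    expMeasure r (Ioc a b) = ENNReal.ofReal (rexp (-(r * a)) - rexp (-(r * b))) := by
  haveI := isProbabilityMeasure_expMeasure hr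
  rcases le_or_gt a b with hab | hab
  · have hIoc : Ioc a b = Iic b \ Iic a := by rw [Iic_sdiff_Iic]
    rw [hIoc, measure_diff (Iic_subset_Iic.2 hab) nullMeasurableSet_Iic (measure_ne_top _ _),
      expMeasure_Iic hr, expMeasure_Iic hr, if_pos (ha.trans hab), if_pos ha,
      ← ENNReal.ofReal_sub _ (by
        have : rexp (-(r * a)) ≤ 1 := by
          rw [Real.exp_le_one_iff]
          exact neg_nonpos.mpr (mul_nonneg hr.le ha)
        linarith)]
    congr 1; ring
  · rw [Ioc_eq_empty (not_lt.mpr hab.le), measure_empty]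
    symm
    rw [ENNReal.ofReal_eq_zero, sub_nonpos]
    apply Real.exp_le_exp.2
    nlinarith

lemma expMeasure_Ioi {r : ℝ} (hr : 0 < r) {a : ℝ} (ha : 0 ≤ a) :
    expMeasure r (Ioi a) = ENNReal.ofReal (rexp (-(r * a))) := by
  haveI := isProbabilityMeasure_expMeasure hr
  have hcompl : Ioi a = (Iic a)ᶜ := by rw [compl_Iic]
  rw [hcompl, measure_compl measurableSet_Iic (measure_ne_top _ _), measure_univ,
    expMeasure_Iic hr, if_pos ha, ← ENNReal.ofReal_one,
    ← ENNReal.ofReal_sub _ (by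
      have : rexp (-(r * a)) ≤ 1 := by
        rw [Real.exp_le_one_iff]
        exact neg_nonpos.mpr (mul_nonneg hr.le ha)
      linarith)]
  congr 1; ring

/-- The main one-dimensional integral computation. -/
lemma key_lintegral {lam c t : ℝ} (hlam : 0 < lam) (hc : 0 < c) (ht : 0 ≤ t) :
    ∫⁻ x in Icc 0 (t / c), ENNReal.ofReal (lam * (rexp (-(c * x)) - rexp (-t)))
      = ENNReal.ofReal (lam / c * (1 - rexp (-t) - t * rexp (-t))) := by
  have hs : (0:ℝ) ≤ t / c := div_nonneg ht hc.le
  rw [← setLIntegral_congr (Ioc_ae_eq_Icc (μ := volume) (a := 0) (b := t / c))]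
  have hcont : Continuous (fun x : ℝ => lam * (rexp (-(c * x)) - rexp (-t))) := by
    fun_prop
  have hint : IntegrableOn (fun x : ℝ => lam * (rexp (-(c * x)) - rexp (-t)))
      (Ioc 0 (t / c)) := hcont.integrableOn_Ioc
  have hnn : 0 ≤ᵐ[volume.restrict (Ioc 0 (t / c))]
      fun x : ℝ => lam * (rexp (-(c * x)) - rexp (-t)) := by
    rw [Filter.EventuallyLE, ae_restrict_iff' measurableSet_Ioc]
    refine Filter.Eventually.of_forall fun x hx => ?_
    have hxt : c * x ≤ t := by
      have := (le_div_iff₀ hc).mp hx.2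
      linarith [mul_comm x c]
    have := Real.exp_le_exp.2 (neg_le_neg hxt)
    have h0 : (0:ℝ) ≤ rexp (-(c * x)) - rexp (-t) := by linarith
    positivity
  rw [← ofReal_integral_eq_lintegral_ofReal hint hnn]
  congr 1
  rw [← intervalIntegral.integral_of_le hs]
  have hctc : c * (t / c) = t := mul_div_cancel₀ t hc.ne'
  have hderiv : ∀ x ∈ uIcc (0:ℝ) (t / c),
      HasDerivAt (fun y : ℝ => lam * (-rexp (-(c * y)) / c - rexp (-t) * y))
        (lam * (rexp (-(c * x)) - rexp (-t))) x := by
    intro x _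
    have h1 : HasDerivAt (fun a : ℝ => -rexp (-(c * a))) (c * rexp (-(c * x))) x :=
      hasDerivAt_neg_exp_mul_exp
    have h2 := h1.div_const c
    have h3 : HasDerivAt (fun a : ℝ => rexp (-t) * a) (rexp (-t)) x := by
      simpa using (hasDerivAt_id x).const_mul (rexp (-t))
    have h4 := ((h2.sub h3).const_mul lam)
    rw [mul_div_cancel_left₀ _ hc.ne'] at h4
    exact h4
  rw [intervalIntegral.integral_eq_sub_of_hasDerivAt hderiv
    (hcont.intervalIntegrable _ _)]
  rw [hctc]
  simp only [mul_zero, neg_zero, Real.exp_zero]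
  field_simp
  ring

lemma exponentialPDF_measurable (r : ℝ) : Measurable (exponentialPDF r) :=
  (measurable_exponentialPDFReal r).ennreal_ofReal

/-- Express the product measure of a measurable set as an integral of slices against the
exponential density, restricted to the nonnegative half-line. -/
lemma prod_apply_pdf {lam mu : ℝ} (hmu : 0 < mu) {S : Set (ℝ × ℝ)} (hS : MeasurableSet S) :
    ((expMeasure lam).prod (expMeasure mu)) S
      = ∫⁻ x in Ici (0:ℝ), exponentialPDF lam x * (expMeasure mu) (Prod.mk x ⁻¹' S) := by
  haveI := isProbabilityMeasure_expMeasure hmu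
  rw [Measure.prod_apply hS, expMeasure_eq_withDensity lam,
    lintegral_withDensity_eq_lintegral_mul _ (exponentialPDF_measurable lam)
      (measurable_measure_prodMk_left hS)]
  simp only [Pi.mul_apply]
  rw [← lintegral_add_compl (fun x => exponentialPDF lam x * (expMeasure mu) (Prod.mk x ⁻¹' S))
    (measurableSet_Ici (a := (0:ℝ)))]
  have hz : ∫⁻ x in (Ici (0:ℝ))ᶜ,
      exponentialPDF lam x * (expMeasure mu) (Prod.mk x ⁻¹' S) = 0 := by
    rw [compl_Ici, setLIntegral_congr_fun measurableSet_Iio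
      (fun x hx => by
        rw [exponentialPDF_of_neg hx, zero_mul]), lintegral_zero]
  rw [hz, add_zero]

/-- Distribution function of `lam * X + mu * Y`. -/
lemma measure_prod_wsum_le {lam mu : ℝ} (hlam : 0 < lam) (hmu : 0 < mu) (t : ℝ) :
    ((expMeasure lam).prod (expMeasure mu)) {p : ℝ × ℝ | lam * p.1 + mu * p.2 ≤ t}
      = ENNReal.ofReal (if 0 ≤ t then 1 - rexp (-t) - t * rexp (-t) else 0) := by
  haveI := isProbabilityMeasure_expMeasure hmu
  have hS : MeasurableSet {p : ℝ × ℝ | lam * p.1 + mu * p.2 ≤ t} :=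
    measurableSet_le ((measurable_fst.const_mul lam).add (measurable_snd.const_mul mu)) measurable_const
  rw [prod_apply_pdf hmu hS]
  have hslice : ∀ x : ℝ, (Prod.mk x ⁻¹' {p : ℝ × ℝ | lam * p.1 + mu * p.2 ≤ t})
      = Iic ((t - lam * x) / mu) := by
    intro x; ext y
    simp only [mem_preimage, mem_setOf_eq, mem_Iic]
    rw [le_div_iff₀ hmu]
    constructor <;> intro h <;> nlinarith [mul_comm y mu]
  by_cases ht : 0 ≤ t
  · rw [if_pos ht]
    have hsplit : Ici (0:ℝ) = Icc 0 (t / lam) ∪ Ioi (t / lam) :=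
      (Icc_union_Ioi_eq_Ici (div_nonneg ht hlam.le)).symm
    rw [hsplit, lintegral_union measurableSet_Ioi
      ((Iic_disjoint_Ioi le_rfl).mono_left Icc_subset_Iic_self)]
    have hz : ∫⁻ x in Ioi (t / lam), exponentialPDF lam x
        * (expMeasure mu) (Prod.mk x ⁻¹' {p : ℝ × ℝ | lam * p.1 + mu * p.2 ≤ t}) = 0 := by
      rw [setLIntegral_congr_fun measurableSet_Ioi
        (fun x hx => ?_), lintegral_zero]
      rw [hslice, expMeasure_Iic hmu, if_neg, ENNReal.ofReal_zero, mul_zero]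
      rw [not_le]
      apply div_neg_of_neg_of_pos _ hmu
      have hx' : t / lam < x := hx
      nlinarith [(div_lt_iff₀ hlam).mp hx']
    rw [hz, add_zero]
    have hcong : ∫⁻ x in Icc 0 (t / lam), exponentialPDF lam x
          * (expMeasure mu) (Prod.mk x ⁻¹' {p : ℝ × ℝ | lam * p.1 + mu * p.2 ≤ t})
        = ∫⁻ x in Icc 0 (t / lam),
            ENNReal.ofReal (lam * (rexp (-(lam * x)) - rexp (-t))) := by
      refine setLIntegral_congr_fun measurableSet_Icc
        (fun x hx => ?_)
      have hx0 : (0:ℝ) ≤ x := hx.1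
      have hxt : lam * x ≤ t := by
        have := (le_div_iff₀ hlam).mp hx.2
        linarith [mul_comm x lam]
      rw [hslice, expMeasure_Iic hmu, if_pos (div_nonneg (by linarith) hmu.le),
        exponentialPDF_of_nonneg hx0, mul_div_cancel₀ _ hmu.ne',
        ← ENNReal.ofReal_mul (by positivity)]
      congr 1
      have hee : rexp (-(lam * x)) * rexp (-(t - lam * x)) = rexp (-t) := by
        rw [← Real.exp_add]; congr 1; ring
      nlinarith [hee]
    rw [hcong, key_lintegral hlam hlam ht, div_self hlam.ne', one_mul]
  · rw [if_neg ht, ENNReal.ofReal_zero]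
    rw [setLIntegral_congr_fun measurableSet_Ici
      (fun x hx => ?_), lintegral_zero]
    rw [hslice, expMeasure_Iic hmu, if_neg, ENNReal.ofReal_zero, mul_zero]
    rw [not_le]
    apply div_neg_of_neg_of_pos _ hmu
    have hx0 : (0:ℝ) ≤ x := hx
    nlinarith [not_le.mp ht]

/-- Joint distribution function of `lam * X + mu * Y` and the event `X < Y`. -/
lemma measure_prod_wsum_le_inter_lt {lam mu : ℝ} (hlam : 0 < lam) (hmu : 0 < mu) (t : ℝ) :
    ((expMeasure lam).prod (expMeasure mu))
        {p : ℝ × ℝ | lam * p.1 + mu * p.2 ≤ t ∧ p.1 < p.2}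
      = ENNReal.ofReal (lam / (lam + mu)
          * (if 0 ≤ t then 1 - rexp (-t) - t * rexp (-t) else 0)) := by
  haveI := isProbabilityMeasure_expMeasure hmu
  have hlm : (0:ℝ) < lam + mu := by linarith
  have hS : MeasurableSet {p : ℝ × ℝ | lam * p.1 + mu * p.2 ≤ t ∧ p.1 < p.2} := by
    refine (measurableSet_le ((measurable_fst.const_mul lam).add (measurable_snd.const_mul mu)) measurable_const).inter ?_
    exact measurableSet_lt measurable_fst measurable_snd
  rw [prod_apply_pdf hmu hS]
  have hslice : ∀ x : ℝ,
      (Prod.mk x ⁻¹' {p : ℝ × ℝ | lam * p.1 + mu * p.2 ≤ t ∧ p.1 < p.2})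
      = Ioc x ((t - lam * x) / mu) := by
    intro x; ext y
    simp only [mem_preimage, mem_setOf_eq, mem_Ioc]
    rw [le_div_iff₀ hmu]
    constructor <;> intro h
    · exact ⟨h.2, by nlinarith [mul_comm y mu]⟩
    · exact ⟨by nlinarith [mul_comm y mu], h.1⟩
  have hcong : ∫⁻ x in Ici (0:ℝ), exponentialPDF lam x
        * (expMeasure mu)
            (Prod.mk x ⁻¹' {p : ℝ × ℝ | lam * p.1 + mu * p.2 ≤ t ∧ p.1 < p.2})
      = ∫⁻ x in Ici (0:ℝ),
          ENNReal.ofReal (lam * (rexp (-((lam + mu) * x)) - rexp (-t))) := by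
    refine setLIntegral_congr_fun measurableSet_Ici
      (fun x hx => ?_)
    have hx0 : (0:ℝ) ≤ x := hx
    rw [hslice, expMeasure_Ioc hmu hx0, mul_div_cancel₀ _ hmu.ne',
      exponentialPDF_of_nonneg hx0, ← ENNReal.ofReal_mul (by positivity)]
    congr 1
    have hee1 : rexp (-(lam * x)) * rexp (-(mu * x)) = rexp (-((lam + mu) * x)) := by
      rw [← Real.exp_add]; congr 1; ring
    have hee2 : rexp (-(lam * x)) * rexp (-(t - lam * x)) = rexp (-t) := by
      rw [← Real.exp_add]; congr 1; ring
    nlinarith [hee1, hee2]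
  rw [hcong]
  by_cases ht : 0 ≤ t
  · rw [if_pos ht]
    have hsplit : Ici (0:ℝ) = Icc 0 (t / (lam + mu)) ∪ Ioi (t / (lam + mu)) :=
      (Icc_union_Ioi_eq_Ici (div_nonneg ht hlm.le)).symm
    rw [hsplit, lintegral_union measurableSet_Ioi
      ((Iic_disjoint_Ioi le_rfl).mono_left Icc_subset_Iic_self)]
    have hz : ∫⁻ x in Ioi (t / (lam + mu)),
        ENNReal.ofReal (lam * (rexp (-((lam + mu) * x)) - rexp (-t))) = 0 := by
      rw [setLIntegral_congr_fun measurableSet_Ioi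
        (fun x hx => ?_), lintegral_zero]
      rw [ENNReal.ofReal_eq_zero]
      have hx' : t / (lam + mu) < x := hx
      have hxt : t < (lam + mu) * x := by nlinarith [(div_lt_iff₀ hlm).mp hx']
      have := Real.exp_le_exp.2 (neg_le_neg hxt.le)
      nlinarith
    rw [hz, add_zero, key_lintegral hlam hlm ht]
  · rw [if_neg ht, mul_zero, ENNReal.ofReal_zero]
    rw [setLIntegral_congr_fun measurableSet_Ici
      (fun x hx => ?_), lintegral_zero]
    rw [ENNReal.ofReal_eq_zero]
    have hx0 : (0:ℝ) ≤ x := hx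
    have h1 : rexp (-((lam + mu) * x)) ≤ 1 := by
      rw [Real.exp_le_one_iff]
      exact neg_nonpos.mpr (by positivity)
    have h2 : (1:ℝ) < rexp (-t) := by
      rw [← Real.exp_zero]
      exact Real.exp_lt_exp.2 (by linarith [not_le.mp ht])
    nlinarith

/-- Probability of the event `X < Y`. -/
lemma measure_prod_lt {lam mu : ℝ} (hlam : 0 < lam) (hmu : 0 < mu) :
    ((expMeasure lam).prod (expMeasure mu)) {p : ℝ × ℝ | p.1 < p.2}
      = ENNReal.ofReal (lam / (lam + mu)) := by
  haveI := isProbabilityMeasure_expMeasure hmu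
  have hlm : (0:ℝ) < lam + mu := by linarith
  have hS : MeasurableSet {p : ℝ × ℝ | p.1 < p.2} :=
    measurableSet_lt measurable_fst measurable_snd
  rw [prod_apply_pdf hmu hS]
  have hslice : ∀ x : ℝ, (Prod.mk x ⁻¹' {p : ℝ × ℝ | p.1 < p.2}) = Ioi x := by
    intro x; ext y; simp [mem_Ioi]
  have hcong : ∫⁻ x in Ici (0:ℝ), exponentialPDF lam x
        * (expMeasure mu) (Prod.mk x ⁻¹' {p : ℝ × ℝ | p.1 < p.2})
      = ∫⁻ x in Ici (0:ℝ),
          ENNReal.ofReal (lam / (lam + mu)) * exponentialPDF (lam + mu) x := by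
    refine setLIntegral_congr_fun measurableSet_Ici
      (fun x hx => ?_)
    have hx0 : (0:ℝ) ≤ x := hx
    rw [hslice, expMeasure_Ioi hmu hx0, exponentialPDF_of_nonneg hx0,
      exponentialPDF_of_nonneg hx0, ← ENNReal.ofReal_mul (by positivity),
      ← ENNReal.ofReal_mul (by positivity)]
    congr 1
    have hee1 : rexp (-(lam * x)) * rexp (-(mu * x)) = rexp (-((lam + mu) * x)) := by
      rw [← Real.exp_add]; congr 1; ring
    have h2 : lam / (lam + mu) * ((lam + mu) * rexp (-((lam + mu) * x)))
        = lam * rexp (-((lam + mu) * x)) := by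
      field_simp
    nlinarith [hee1, h2]
  rw [hcong, lintegral_const_mul _ (exponentialPDF_measurable (lam + mu))]
  have hone : ∫⁻ x in Ici (0:ℝ), exponentialPDF (lam + mu) x = 1 := by
    have h := lintegral_exponentialPDF_eq_one hlm
    rw [← lintegral_add_compl (exponentialPDF (lam + mu))
      (measurableSet_Ici (a := (0:ℝ))), compl_Ici,
      show ∫⁻ x in Iio (0:ℝ), exponentialPDF (lam + mu) x = 0 from
        lintegral_exponentialPDF_of_nonpos le_rfl, add_zero] at h
    exact h
  rw [hone, mul_one]

end WSIOE

/-- If `X ~ Exp(λ)` and `Y ~ Exp(μ)` are independent, then `S = λX + μY` is independent of the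
event `[X < Y]` (i.e. `P(S ≤ t, X < Y) = P(S ≤ t) P(X < Y)` for all `t`), and conditional on
`[X < Y]`, `S` is distributed as the sum of two independent exponential(1) random variables. -/
theorem weighted_sum_indep_of_order_event
    {Ω : Type*} [MeasurableSpace Ω] (P : Measure Ω) [IsProbabilityMeasure P]
    (lam mu : ℝ) (hlam : 0 < lam) (hmu : 0 < mu)
    (X Y : Ω → ℝ)
    (hX : Measure.map X P = expMeasure lam)
    (hY : Measure.map Y P = expMeasure mu)
    (hindep : IndepFun X Y P) :
    (∀ t : ℝ,
      P ({ω | lam * X ω + mu * Y ω ≤ t} ∩ {ω | X ω < Y ω}) =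
        P {ω | lam * X ω + mu * Y ω ≤ t} * P {ω | X ω < Y ω}) ∧
    Measure.map (fun ω => lam * X ω + mu * Y ω) (P[|{ω | X ω < Y ω}]) =
      Measure.map (fun p : ℝ × ℝ => p.1 + p.2)
        ((expMeasure 1).prod (expMeasure 1)) := by
  classical
  haveI hprob1 := isProbabilityMeasure_expMeasure (one_pos : (0:ℝ) < 1)
  haveI := isProbabilityMeasure_expMeasure hlam
  haveI := isProbabilityMeasure_expMeasure hmu
  set q : ℝ := lam / (lam + mu) with hq
  have hq0 : 0 < q := by positivity
  set φ : ℝ → ℝ := fun t => if 0 ≤ t then 1 - Real.exp (-t) - t * Real.exp (-t) else 0 with hφ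
  -- almost-everywhere measurability
  have hXae : AEMeasurable X P := by
    by_contra h
    rw [Measure.map_of_not_aemeasurable h] at hX
    exact (IsProbabilityMeasure.ne_zero (expMeasure lam)) hX.symm
  have hYae : AEMeasurable Y P := by
    by_contra h
    rw [Measure.map_of_not_aemeasurable h] at hY
    exact (IsProbabilityMeasure.ne_zero (expMeasure mu)) hY.symm
  have hpair : AEMeasurable (fun ω => (X ω, Y ω)) P := hXae.prodMk hYae
  have hmap : Measure.map (fun ω => (X ω, Y ω)) P = (expMeasure lam).prod (expMeasure mu) := by
    rw [(ProbabilityTheory.indepFun_iff_map_prod_eq_prod_map_map hXae hYae).mp hindep, hX, hY]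
  have key : ∀ (S : Set (ℝ × ℝ)), MeasurableSet S →
      P ((fun ω => (X ω, Y ω)) ⁻¹' S) = ((expMeasure lam).prod (expMeasure mu)) S := by
    intro S hS
    rw [← hmap, Measure.map_apply_of_aemeasurable hpair hS]
  -- values of the three probabilities
  have hSlt : MeasurableSet {p : ℝ × ℝ | p.1 < p.2} :=
    measurableSet_lt measurable_fst measurable_snd
  have hPA : P {ω | X ω < Y ω} = ENNReal.ofReal q := by
    have := key {p : ℝ × ℝ | p.1 < p.2} hSlt
    rw [WSIOE.measure_prod_lt hlam hmu] at this
    exact this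
  have hPF : ∀ t : ℝ, P {ω | lam * X ω + mu * Y ω ≤ t} = ENNReal.ofReal (φ t) := by
    intro t
    have hS : MeasurableSet {p : ℝ × ℝ | lam * p.1 + mu * p.2 ≤ t} :=
      measurableSet_le ((measurable_fst.const_mul lam).add (measurable_snd.const_mul mu)) measurable_const
    have := key {p : ℝ × ℝ | lam * p.1 + mu * p.2 ≤ t} hS
    rw [WSIOE.measure_prod_wsum_le hlam hmu] at this
    exact this
  have hPG : ∀ t : ℝ, P ({ω | lam * X ω + mu * Y ω ≤ t} ∩ {ω | X ω < Y ω})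
      = ENNReal.ofReal (q * φ t) := by
    intro t
    have hS : MeasurableSet {p : ℝ × ℝ | lam * p.1 + mu * p.2 ≤ t ∧ p.1 < p.2} := by
      refine (measurableSet_le ((measurable_fst.const_mul lam).add (measurable_snd.const_mul mu)) measurable_const).inter hSlt
    have h2 := key {p : ℝ × ℝ | lam * p.1 + mu * p.2 ≤ t ∧ p.1 < p.2} hS
    rw [WSIOE.measure_prod_wsum_le_inter_lt hlam hmu] at h2
    have hsets : {ω | lam * X ω + mu * Y ω ≤ t} ∩ {ω | X ω < Y ω}
        = (fun ω => (X ω, Y ω)) ⁻¹' {p : ℝ × ℝ | lam * p.1 + mu * p.2 ≤ t ∧ p.1 < p.2} := by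
      ext ω; simp [Set.mem_inter_iff]
    rw [hsets, h2]
  constructor
  · intro t
    rw [hPG t, hPF t, hPA, ENNReal.ofReal_mul hq0.le]
    exact mul_comm _ _
  · -- conditional distribution
    set A : Set Ω := {ω | X ω < Y ω} with hA
    have hPA0 : P A ≠ 0 := by rw [hPA]; simp [ENNReal.ofReal_eq_zero, not_le, hq0]
    haveI hcprob : IsProbabilityMeasure (P[|A]) := cond_isProbabilityMeasure hPA0
    have hSae : AEMeasurable (fun ω => lam * X ω + mu * Y ω) P :=
      (hXae.const_mul lam).add (hYae.const_mul mu)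
    have hScond : AEMeasurable (fun ω => lam * X ω + mu * Y ω) (P[|A]) :=
      hSae.mono' ProbabilityTheory.cond_absolutelyContinuous
    have hsum : Measurable (fun p : ℝ × ℝ => p.1 + p.2) :=
      measurable_fst.add measurable_snd
    haveI : IsProbabilityMeasure
        (Measure.map (fun ω => lam * X ω + mu * Y ω) (P[|A])) :=
      Measure.isProbabilityMeasure_map hScond
    refine Measure.ext_of_Iic _ _ (fun a => ?_)
    rw [Measure.map_apply_of_aemeasurable hScond measurableSet_Iic,
      Measure.map_apply hsum measurableSet_Iic]
    have hL : (P[|A]) ((fun ω => lam * X ω + mu * Y ω) ⁻¹' Set.Iic a)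
        = (P A)⁻¹ * P (((fun ω => lam * X ω + mu * Y ω) ⁻¹' Set.Iic a) ∩ A) := by
      simp only [ProbabilityTheory.cond, Measure.smul_apply, smul_eq_mul]
      congr 1
      exact Measure.restrict_apply₀
        ((hSae.restrict.nullMeasurable) measurableSet_Iic)
    have hpre : ((fun ω => lam * X ω + mu * Y ω) ⁻¹' Set.Iic a) ∩ A
        = {ω | lam * X ω + mu * Y ω ≤ a} ∩ {ω | X ω < Y ω} := rfl
    rw [hL, hpre, hPG a, hPA]
    have hR : (fun p : ℝ × ℝ => p.1 + p.2) ⁻¹' Set.Iic a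
        = {p : ℝ × ℝ | 1 * p.1 + 1 * p.2 ≤ a} := by
      ext p; simp
    rw [hR, WSIOE.measure_prod_wsum_le one_pos one_pos a]
    rw [ENNReal.ofReal_mul hq0.le, ← mul_assoc,
      ENNReal.inv_mul_cancel (by simp [ENNReal.ofReal_eq_zero, not_le, hq0])
        ENNReal.ofReal_ne_top, one_mul]
end

section
/- Under the nearest-item heuristic with n i.i.d. uniform item locations, the total travel time T_n^{NI} is stochastically bounded by 1 - 1/2^n, i.e., P(T_n^{NI} ≤ 1 - 2^{-n}) = 1, and this bound is tight. -/
open MeasureTheory ProbabilityTheory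

/-- Circular (shortest-arc) distance between points `p` and `x` on the circle `ℝ/ℤ`
of circumference 1. -/
noncomputable def circDist (p x : ℝ) : ℝ := min (Int.fract (x - p)) (Int.fract (p - x))

/-- The route of the picker under the nearest-item heuristic: starting at `p`, repeatedly
travel to the nearest (in circular distance) remaining item. -/
noncomputable def niRoute (p : ℝ) (S : Finset ℝ) : List ℝ :=
  if h : S.Nonempty then
    let x := Classical.choose (S.exists_min_image (circDist p) h)
    x :: niRoute x (S.erase x)
  else []
termination_by S.card
decreasing_by
  exact Finset.card_erase_lt_of_mem (Classical.choose_spec (S.exists_min_image (circDist p) h)).1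

/-- Total circular distance travelled along a route starting at `p`. -/
noncomputable def pathLength (p : ℝ) : List ℝ → ℝ
  | [] => 0
  | x :: xs => circDist p x + pathLength x xs

/-- The total travel time (= travel distance, at unit speed) of the picker under the
nearest-item heuristic, starting at `p`, with items at the positions in `S`. -/
noncomputable def niTravel (p : ℝ) (S : Finset ℝ) : ℝ := pathLength p (niRoute p S)

/-- The direction (clockwise = `true`) of the step from `p` to the nearest point `x`. -/
noncomputable def stepDir (p x : ℝ) : Bool := Int.fract (x - p) ≤ Int.fract (p - x)

/-- The list of directions of the successive steps of a route starting at `p`. -/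
noncomputable def routeDirs (p : ℝ) : List ℝ → List Bool
  | [] => []
  | x :: xs => stepDir p x :: routeDirs x xs

/-- The number of changes of direction in a list of step directions. -/
def countTurns : List Bool → ℕ
  | [] => 0
  | [_] => 0
  | a :: b :: rest => (if a ≠ b then 1 else 0) + countTurns (b :: rest)

/-- The number of turns (changes of direction) made by the picker under the nearest-item
heuristic starting at `p` with items at the positions in `S`. -/
noncomputable def niTurns (p : ℝ) (S : Finset ℝ) : ℕ := countTurns (routeDirs p (niRoute p S))

/-- The order statistics of `u`, extended with `0` at the bottom and `1` at the top. -/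
noncomputable def sortedExt (n : ℕ) (u : Fin n → ℝ) : Fin (n + 2) → ℝ :=
  Fin.cons 0 (Fin.snoc (u ∘ Tuple.sort u) 1)

/-- The uniform spacings `D_{i+1,n} = U_{(i+1):n} - U_{i:n}` (0-indexed by `i : Fin (n+1)`). -/
noncomputable def spacing (n : ℕ) (u : Fin n → ℝ) (i : Fin (n + 1)) : ℝ :=
  sortedExt n u i.succ - sortedExt n u i.castSucc

lemma fract_sub_eq {A B : ℝ} (h : Int.fract B ≤ Int.fract A) :
    Int.fract (A - B) = Int.fract A - Int.fract B := by
  have hA : A - B = (Int.fract A - Int.fract B) + ((⌊A⌋ - ⌊B⌋ : ℤ) : ℝ) := by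
    rw [Int.fract, Int.fract]; push_cast; ring
  rw [hA, Int.fract_add_intCast]
  exact Int.fract_eq_self.mpr ⟨by linarith, by linarith [Int.fract_lt_one A, Int.fract_nonneg B]⟩

lemma fract_neg_le {X d : ℝ} (h : d ≤ Int.fract X) : Int.fract (-X) ≤ 1 - d := by
  rcases eq_or_ne (Int.fract X) 0 with h0 | h0
  · rw [Int.fract_neg_eq_zero.mpr h0]
    have := Int.fract_nonneg X
    linarith [h0 ▸ h]
  · rw [Int.fract_neg h0]; linarith

lemma circDist_nonneg (p x : ℝ) : 0 ≤ circDist p x :=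
  le_min (Int.fract_nonneg _) (Int.fract_nonneg _)

lemma circDist_le_half (p x : ℝ) : circDist p x ≤ 1/2 := by
  unfold circDist
  rcases eq_or_ne (Int.fract (x - p)) 0 with h | h
  · calc min (Int.fract (x-p)) (Int.fract (p-x)) ≤ Int.fract (x-p) := min_le_left _ _
      _ ≤ 1/2 := by rw [h]; norm_num
  · have hpx : p - x = -(x - p) := by ring
    rw [hpx, Int.fract_neg h]
    rcases le_total (Int.fract (x-p)) (1/2) with h2 | h2
    · exact le_trans (min_le_left _ _) h2
    · exact le_trans (min_le_right _ _) (by linarith)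

lemma niRoute_empty (p : ℝ) : niRoute p (∅ : Finset ℝ) = [] := by
  rw [niRoute]; simp

lemma niRoute_of_nonempty {S : Finset ℝ} (p : ℝ) (h : S.Nonempty) :
    niRoute p S = Classical.choose (S.exists_min_image (circDist p) h) ::
      niRoute (Classical.choose (S.exists_min_image (circDist p) h))
        (S.erase (Classical.choose (S.exists_min_image (circDist p) h))) := by
  rw [niRoute, dif_pos h]

lemma niTravel_empty (p : ℝ) : niTravel p (∅ : Finset ℝ) = 0 := by
  rw [niTravel, niRoute_empty, pathLength]

lemma niTravel_of_nonempty {S : Finset ℝ} (p : ℝ) (h : S.Nonempty) :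
    niTravel p S = circDist p (Classical.choose (S.exists_min_image (circDist p) h)) +
      niTravel (Classical.choose (S.exists_min_image (circDist p) h))
        (S.erase (Classical.choose (S.exists_min_image (circDist p) h))) := by
  rw [niTravel, niRoute_of_nonempty p h, pathLength, niTravel]

lemma key_bound : ∀ (m : ℕ) (S : Finset ℝ) (p L σ : ℝ), S.card = m → (σ = 1 ∨ σ = -1) →
    0 ≤ L → (∀ y ∈ S, Int.fract (σ * (y - p)) ≤ L) →
    niTravel p S ≤ min L (1 - ((2:ℝ)^m)⁻¹) := by
  intro m
  induction m with
  | zero =>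
    intro S p L σ hcard _ hL _
    rw [Finset.card_eq_zero] at hcard; subst hcard
    rw [niTravel_empty]
    simp only [pow_zero, inv_one, sub_self]
    exact le_min hL le_rfl
  | succ m IH =>
    intro S p L σ hcard hσ hL H
    have hne : S.Nonempty := by rw [← Finset.card_pos, hcard]; omega
    obtain ⟨hxS, hxmin⟩ := Classical.choose_spec (S.exists_min_image (circDist p) hne)
    set x := Classical.choose (S.exists_min_image (circDist p) hne) with hxdef
    have hcirc : ∀ q y : ℝ, circDist q y =
        min (Int.fract (σ*(y-q))) (Int.fract (σ*(q-y))) := by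
      intro q y
      rcases hσ with h|h <;> subst h
      · simp [circDist]
      · rw [show (-1:ℝ)*(y-q) = q - y by ring, show (-1:ℝ)*(q-y) = y - q by ring,
          circDist, min_comm]
    have hunf := niTravel_of_nonempty p hne
    rw [← hxdef] at hunf
    set d := circDist p x with hd
    have hd0 : 0 ≤ d := circDist_nonneg p x
    have hdhalf : d ≤ 1/2 := circDist_le_half p x
    have hcard' : (S.erase x).card = m := by
      rw [Finset.card_erase_of_mem hxS, hcard]; omega
    have hq : ((2:ℝ)^(m+1))⁻¹ = ((2:ℝ)^m)⁻¹ / 2 := by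
      rw [pow_succ, mul_inv]; ring
    set q := ((2:ℝ)^m)⁻¹ with hqdef
    have hqpos : (0:ℝ) < q := by positivity
    -- lower bounds on fract for remaining points
    have hyfr : ∀ y ∈ S.erase x, d ≤ Int.fract (σ*(y-p)) ∧ d ≤ Int.fract (σ*(p-y)) := by
      intro y hy
      have := hxmin y (Finset.mem_of_mem_erase hy)
      rw [hcirc p y] at this
      exact ⟨le_trans this (min_le_left _ _), le_trans this (min_le_right _ _)⟩
    rcases le_or_gt (Int.fract (σ*(x-p))) (Int.fract (σ*(p-x))) with h1 | h1
    · -- forward case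
      have hdval : d = Int.fract (σ*(x-p)) := by
        rw [hd, hcirc p x]; exact min_eq_left h1
      have hdL : d ≤ L := hdval ▸ H x hxS
      have H' : ∀ y ∈ S.erase x, Int.fract (σ*(y - x)) ≤ min (L - d) (1 - 2*d) := by
        intro y hy
        obtain ⟨h3, h4⟩ := hyfr y hy
        have h5 : Int.fract (σ*(y-p)) ≤ 1 - d := by
          have := fract_neg_le (X := σ*(p-y)) h4
          rwa [show -(σ*(p-y)) = σ*(y-p) by ring] at this
        have h6 : Int.fract (σ*(y-p)) ≤ L := H y (Finset.mem_of_mem_erase hy)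
        have h7 : Int.fract (σ*(y-x)) = Int.fract (σ*(y-p)) - d := by
          rw [show σ*(y-x) = σ*(y-p) - σ*(x-p) by ring,
            fract_sub_eq (by rw [← hdval]; exact h3), ← hdval]
        rw [h7]
        exact le_min (by linarith) (by linarith)
      have hIH := IH (S.erase x) x (min (L - d) (1 - 2*d)) σ hcard' hσ
        (le_min (by linarith) (by linarith)) H'
      have hM1 : min (min (L-d) (1-2*d)) (1 - q) ≤ L - d :=
        le_trans (min_le_left _ _) (min_le_left _ _)
      have hM2 : min (min (L-d) (1-2*d)) (1 - q) ≤ 1-2*d :=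
        le_trans (min_le_left _ _) (min_le_right _ _)
      have hM3 : min (min (L-d) (1-2*d)) (1 - q) ≤ 1 - q := min_le_right _ _
      rw [hunf, hq]
      have := le_min_iff.mp hIH
      apply le_min
      · linarith [this.1]
      · rcases le_or_gt d (q/2) with hc | hc
        · linarith [this.2]
        · linarith [this.1]
    · -- backward case
      have hdval : d = Int.fract (σ*(p-x)) := by
        rw [hd, hcirc p x]; exact min_eq_right h1.le
      have hne0 : Int.fract (σ*(x-p)) ≠ 0 := by
        intro h0
        rw [h0] at h1
        exact absurd h1 (not_lt.mpr (Int.fract_nonneg _))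
      have hfx : Int.fract (σ*(p-x)) = 1 - Int.fract (σ*(x-p)) := by
        have := Int.fract_neg (x := σ*(x-p)) hne0
        rwa [show -(σ*(x-p)) = σ*(p-x) by ring] at this
      have h1L : 1 - d ≤ L := by
        have := H x hxS
        rw [hdval, hfx]; linarith
      have H' : ∀ y ∈ S.erase x, Int.fract ((-σ)*(y - x)) ≤ 1 - 2*d := by
        intro y hy
        obtain ⟨h3, h4⟩ := hyfr y hy
        have h5 : Int.fract (σ*(p-y)) ≤ 1 - d := by
          have := fract_neg_le (X := σ*(y-p)) h3
          rwa [show -(σ*(y-p)) = σ*(p-y) by ring] at this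
        have h7 : Int.fract ((-σ)*(y-x)) = Int.fract (σ*(p-y)) - d := by
          rw [show (-σ)*(y-x) = σ*(p-y) - σ*(p-x) by ring,
            fract_sub_eq (by rw [← hdval]; exact h4), ← hdval]
        rw [h7]; linarith
      have hσ' : -σ = 1 ∨ -σ = -1 := by
        rcases hσ with h|h <;> subst h <;> [right; left] <;> norm_num
      have hIH := IH (S.erase x) x (1 - 2*d) (-σ) hcard' hσ' (by linarith) H'
      have := le_min_iff.mp hIH
      rw [hunf, hq]
      apply le_min
      · linarith [this.1]
      · rcases le_or_gt d (q/2) with hc | hc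
        · linarith [this.2]
        · linarith [this.1]

lemma part1 (S : Finset ℝ) : niTravel 0 S ≤ 1 - ((2:ℝ)^S.card)⁻¹ := by
  have h := key_bound S.card S 0 1 1 rfl (Or.inl rfl) zero_le_one
    (fun y _ => by rw [one_mul]; exact (Int.fract_lt_one _).le)
  have h2 : (0:ℝ) ≤ ((2:ℝ)^S.card)⁻¹ := by positivity
  exact le_trans h (min_le_right _ _)

def Forced (p : ℝ) : List ℝ → Prop
  | [] => True
  | x :: xs => (∀ y ∈ xs, circDist p x < circDist p y) ∧ Forced x xs

lemma forced_route : ∀ (v : List ℝ) (p : ℝ), Forced p v → niRoute p v.toFinset = v := by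
  intro v
  induction v with
  | nil => intro p _; simpa using niRoute_empty p
  | cons x xs ih =>
    intro p hf
    have hxnot : x ∉ xs := fun hmem => lt_irrefl _ (hf.1 x hmem)
    have hne : (x :: xs).toFinset.Nonempty := ⟨x, by simp⟩
    obtain ⟨hmem, hmin⟩ := Classical.choose_spec ((x::xs).toFinset.exists_min_image (circDist p) hne)
    have hch : Classical.choose ((x::xs).toFinset.exists_min_image (circDist p) hne) = x := by
      set z := Classical.choose ((x::xs).toFinset.exists_min_image (circDist p) hne) with hz
      by_contra hzx
      have hzxs : z ∈ xs := by
        rcases List.mem_cons.mp (List.mem_toFinset.mp hmem) with h | h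
        · exact absurd h hzx
        · exact h
      have h1 := hf.1 z hzxs
      have h2 := hmin x (by simp)
      linarith
    rw [niRoute_of_nonempty p hne, hch]
    have herase : (x :: xs).toFinset.erase x = xs.toFinset := by
      rw [List.toFinset_cons]
      exact Finset.erase_insert (by simpa using hxnot)
    rw [herase]
    rw [ih x hf.2]

lemma mono_aux (v : ℕ → ℝ) (m : ℕ) (h1 : ∀ k, k < m → v k < v (k+1)) :
    ∀ a b, a < b → b ≤ m → v a < v b := by
  intro a b
  induction b with
  | zero => omega
  | succ b ihb =>
    intro hab hbm
    rcases Nat.lt_or_ge a b with h | h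
    · exact lt_trans (ihb h (by omega)) (h1 b (by omega))
    · have : a = b := by omega
      subst this; exact h1 a (by omega)

lemma circDist_eq {a b : ℝ} (h1 : a ≤ b) (h2 : b - a ≤ 1/2) : circDist a b = b - a := by
  rcases eq_or_lt_of_le h1 with h | h
  · subst h; simp [circDist]
  · have hf1 : Int.fract (b - a) = b - a := Int.fract_eq_self.mpr ⟨by linarith, by linarith⟩
    have hne : Int.fract (b - a) ≠ 0 := by rw [hf1]; linarith
    have hf2 : Int.fract (a - b) = 1 - (b - a) := by
      have := Int.fract_neg hne
      rwa [show -(b-a) = a - b by ring, hf1] at this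
    rw [circDist, hf1, hf2]
    exact min_eq_left (by linarith)

lemma chain_lemma : ∀ (m : ℕ) (v : ℕ → ℝ),
    (∀ k, k < m → v k < v (k+1)) →
    (∀ k j, k < j → j ≤ m → v (k+1) + v j < 1 + 2 * v k) →
    Forced (v 0) (List.ofFn (fun i : Fin m => v (i+1))) ∧
    pathLength (v 0) (List.ofFn (fun i : Fin m => v (i+1))) = v m - v 0 := by
  intro m
  induction m with
  | zero => intro v _ _; exact ⟨trivial, by simp [pathLength]⟩
  | succ m ih =>
    intro v h1 h2
    have hlist : List.ofFn (fun i : Fin (m+1) => v (i+1)) =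
        v 1 :: List.ofFn (fun i : Fin m => v (i+1+1)) := by
      rw [List.ofFn_succ]; rfl
    have ihv := ih (fun k => v (k+1)) (fun k hk => h1 (k+1) (by omega))
      (fun k j hkj hj => h2 (k+1) (j+1) (by omega) (by omega))
    have hmono := mono_aux v (m+1) h1
    have hstep : ∀ j, 1 ≤ j → j ≤ m+1 → v 1 - v 0 < 1 - (v j - v 0) := by
      intro j hj1 hjm
      have := h2 0 j (by omega) hjm
      have hv1j : v 1 ≤ v j := by
        rcases eq_or_lt_of_le hj1 with h | h
        · rw [← h]
        · exact (hmono 1 j h hjm).le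
      linarith
    have hhalf : v 1 - v 0 ≤ 1/2 := by
      have := hstep 1 le_rfl (by omega); linarith
    have hv01 : v 0 ≤ v 1 := (h1 0 (by omega)).le
    have hcd1 : circDist (v 0) (v 1) = v 1 - v 0 := circDist_eq hv01 hhalf
    constructor
    · rw [hlist]
      refine ⟨?_, ?_⟩
      · intro y hy
        obtain ⟨i, rfl⟩ : ∃ i : Fin m, v (i+1+1) = y := by
          simpa [List.mem_ofFn] using hy
        set j : ℕ := (i : ℕ) + 2 with hj
        have hj2 : 2 ≤ j := by omega
        have hjm : j ≤ m + 1 := by omega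
        have hv0j : v 0 < v j := hmono 0 j (by omega) hjm
        have hj1 : v j - v 0 < 1 := by
          have := hstep j (by omega) hjm
          have := hmono 0 1 (by omega) (by omega)
          linarith
        have hf1 : Int.fract (v j - v 0) = v j - v 0 :=
          Int.fract_eq_self.mpr ⟨by linarith, hj1⟩
        have hne : Int.fract (v j - v 0) ≠ 0 := by rw [hf1]; linarith
        have hf2 : Int.fract (v 0 - v j) = 1 - (v j - v 0) := by
          have := Int.fract_neg hne
          rwa [show -(v j - v 0) = v 0 - v j by ring, hf1] at this
        have : circDist (v 0) (v ((i:ℕ)+1+1)) = min (v j - v 0) (1 - (v j - v 0)) := by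
          rw [circDist, hf1, hf2]
        rw [this, hcd1]
        apply lt_min
        · have := hmono 1 j (by omega) hjm; linarith
        · exact hstep j (by omega) hjm
      · exact ihv.1
    · rw [hlist, pathLength, hcd1]
      have := ihv.2
      rw [this]; ring

lemma tight_det (n : ℕ) (hn : 1 ≤ n) (η : ℝ) (hη : 0 < η)
    (hηβ : (2*(n:ℝ)+2) * η ≤ ((2:ℝ)^n)⁻¹)
    (u : Fin n → ℝ)
    (hu : ∀ i : Fin n,
      ((2:ℝ)^((i:ℕ)+1) - 1) * ((2:ℝ)^n)⁻¹ - (((i:ℕ):ℝ)+1+1/2)*η < u i ∧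
      u i < ((2:ℝ)^((i:ℕ)+1) - 1) * ((2:ℝ)^n)⁻¹ - (((i:ℕ):ℝ)+1)*η) :
    1 - ((2:ℝ)^n)⁻¹ - ((n:ℝ)+1)*η < niTravel 0 (Finset.image u Finset.univ) := by
  set β : ℝ := ((2:ℝ)^n)⁻¹ with hβdef
  have hβ : 0 < β := by positivity
  set t : ℕ → ℝ := fun k => ((2:ℝ)^k - 1) * β with ht
  set v : ℕ → ℝ := fun k => Nat.casesOn k 0 (fun j => if h : j < n then u ⟨j,h⟩ else 0) with hv
  have hv0 : v 0 = 0 := rfl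
  have hvs : ∀ j (h : j < n), v (j+1) = u ⟨j, h⟩ := by
    intro j h; simp only [hv]; rw [dif_pos h]
  have hlb : ∀ k, k ≤ n → t k - ((k:ℝ)+1/2)*η < v k := by
    intro k hk
    cases k with
    | zero => simp only [hv0, ht, pow_zero]; push_cast; nlinarith
    | succ j =>
      have hjn : j < n := by omega
      rw [hvs j hjn]
      have := (hu ⟨j, hjn⟩).1
      simp only [ht]; push_cast; push_cast at this; linarith
  have hub : ∀ k, k ≤ n → v k ≤ t k - (k:ℝ)*η := by
    intro k hk
    cases k with
    | zero => simp only [hv0, ht, pow_zero]; push_cast; nlinarith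
    | succ j =>
      have hjn : j < n := by omega
      rw [hvs j hjn]
      have := (hu ⟨j, hjn⟩).2
      simp only [ht]; push_cast; push_cast at this; linarith
  have hn1 : (1:ℝ) ≤ (n:ℝ) := by exact_mod_cast hn
  have h4 : 4*η ≤ β := by nlinarith
  have h2pow : ∀ k, k ≤ n → (2:ℝ)^k * β ≤ 1 := by
    intro k hk
    have h1 : (2:ℝ)^k ≤ 2^n := pow_le_pow_right₀ one_le_two hk
    have h2 : (2:ℝ)^n * β = 1 := by
      rw [hβdef]; field_simp
    nlinarith
  have H1 : ∀ k, k < n → v k < v (k+1) := by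
    intro k hk
    have l1 := hlb (k+1) (by omega)
    have l2 := hub k (by omega)
    have l3 : t (k+1) - t k = (2:ℝ)^k * β := by
      simp only [ht, pow_succ]; ring
    have l4 : (1:ℝ) ≤ (2:ℝ)^k := one_le_pow₀ one_le_two
    push_cast at l1
    nlinarith
  have H2 : ∀ k j, k < j → j ≤ n → v (k+1) + v j < 1 + 2 * v k := by
    intro k j hkj hjn
    have u1 := hub (k+1) (by omega)
    have u2 := hub j hjn
    have l1 := hlb k (by omega)
    have idt : t (k+1) + t j - 2 * t k = (2:ℝ)^j * β := by
      simp only [ht, pow_succ]; ring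
    have hjb := h2pow j hjn
    have hkj' : (k:ℝ) + 1 ≤ (j:ℝ) := by exact_mod_cast hkj
    push_cast at u1
    nlinarith
  have hchain := chain_lemma n v H1 H2
  have hfun : (fun i : Fin n => v ((i:ℕ)+1)) = u := by
    funext i
    rw [hvs (i:ℕ) i.isLt]
  have himg : Finset.image u Finset.univ = (List.ofFn (fun i : Fin n => v ((i:ℕ)+1))).toFinset := by
    rw [hfun]
    ext a
    simp [List.mem_ofFn, eq_comm]
  have hroute : niTravel 0 (Finset.image u Finset.univ) = v n - v 0 := by
    rw [himg, niTravel, ← hv0, forced_route _ _ hchain.1, hchain.2]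
  rw [hroute, hv0, sub_zero]
  have lf := hlb n le_rfl
  have htn : t n = 1 - β := by
    have h2 : (2:ℝ)^n * β = 1 := by rw [hβdef]; field_simp
    simp only [ht]; nlinarith
  rw [htn] at lf
  nlinarith

/-- The nearest-item travel time for `n` i.i.d. uniform item locations is a.s. at most
`1 - 2^{-n}`, and this bound is tight: for every `ε > 0` the travel time exceeds
`1 - 2^{-n} - ε` with positive probability. -/
theorem nearestItem_travelTime_bound_tight
    {Ω : Type*} [MeasurableSpace Ω] (μ : Measure Ω) [IsProbabilityMeasure μ]
    (n : ℕ) (U : Fin n → Ω → ℝ)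
    (hUindep : iIndepFun U μ)
    (hUunif : ∀ i, Measure.map (U i) μ = volume.restrict (Set.Ico (0 : ℝ) 1)) :
    μ {ω | niTravel 0 (Finset.image (fun i => U i ω) Finset.univ) ≤
        1 - ((2 : ℝ) ^ n)⁻¹} = 1 ∧
    ∀ ε : ℝ, 0 < ε →
      0 < μ {ω | 1 - ((2 : ℝ) ^ n)⁻¹ - ε <
        niTravel 0 (Finset.image (fun i => U i ω) Finset.univ)} := by
  constructor
  · have huniv : {ω | niTravel 0 (Finset.image (fun i => U i ω) Finset.univ) ≤
        1 - ((2 : ℝ) ^ n)⁻¹} = Set.univ := by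
      apply Set.eq_univ_of_forall
      intro ω
      set S := Finset.image (fun i => U i ω) Finset.univ with hS
      have hcard : S.card ≤ n := le_trans Finset.card_image_le (by simp)
      have hpow : (2:ℝ)^S.card ≤ 2^n := pow_le_pow_right₀ one_le_two hcard
      have hmono : ((2:ℝ)^n)⁻¹ ≤ ((2:ℝ)^S.card)⁻¹ := by
        apply inv_anti₀ (by positivity) hpow
      have := part1 S
      show niTravel 0 S ≤ 1 - ((2:ℝ)^n)⁻¹
      linarith
    rw [huniv]; exact measure_univ
  · intro ε hε
    rcases Nat.eq_zero_or_pos n with hn0 | hn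
    · subst hn0
      have huniv : {ω | 1 - ((2 : ℝ) ^ 0)⁻¹ - ε <
          niTravel 0 (Finset.image (fun i : Fin 0 => U i ω) Finset.univ)} = Set.univ := by
        apply Set.eq_univ_of_forall
        intro ω
        show 1 - ((2:ℝ)^0)⁻¹ - ε < niTravel 0 (Finset.image (fun i : Fin 0 => U i ω) Finset.univ)
        rw [Finset.univ_eq_empty, Finset.image_empty, niTravel_empty]
        norm_num; exact hε
      rw [huniv]; simp
    · set β : ℝ := ((2:ℝ)^n)⁻¹ with hβdef
      have hβ : 0 < β := by positivity
      set η : ℝ := min (ε/((n:ℝ)+1)) (β/(2*(n:ℝ)+2)) with hηdef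
      have hnpos : (0:ℝ) < (n:ℝ) := by exact_mod_cast hn
      have hη : 0 < η := lt_min (by positivity) (by positivity)
      have hηβ : (2*(n:ℝ)+2) * η ≤ β := by
        have := min_le_right (ε/((n:ℝ)+1)) (β/(2*(n:ℝ)+2))
        rw [← hηdef] at this
        rw [mul_comm]
        exact (le_div_iff₀ (by positivity)).mp this
      have hηε : ((n:ℝ)+1) * η ≤ ε := by
        have := min_le_left (ε/((n:ℝ)+1)) (β/(2*(n:ℝ)+2))
        rw [← hηdef] at this
        rw [mul_comm]
        exact (le_div_iff₀ (by positivity)).mp this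
      set a : Fin n → ℝ := fun i => ((2:ℝ)^((i:ℕ)+1) - 1) * β - (((i:ℕ):ℝ)+1+1/2)*η with ha
      set b : Fin n → ℝ := fun i => ((2:ℝ)^((i:ℕ)+1) - 1) * β - (((i:ℕ):ℝ)+1)*η with hb
      have hsub : (⋂ i, (U i)⁻¹' (Set.Ioo (a i) (b i))) ⊆
          {ω | 1 - β - ε < niTravel 0 (Finset.image (fun i => U i ω) Finset.univ)} := by
        intro ω hω
        simp only [Set.mem_iInter, Set.mem_preimage, Set.mem_Ioo] at hω
        have := tight_det n hn η hη hηβ (fun i => U i ω) (fun i => ⟨(hω i).1, (hω i).2⟩)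
        show 1 - β - ε < _
        linarith
      refine lt_of_lt_of_le ?_ (measure_mono hsub)
      have hmeas := hUindep.meas_iInter (s := fun i => (U i)⁻¹' (Set.Ioo (a i) (b i)))
        (fun i => ⟨Set.Ioo (a i) (b i), measurableSet_Ioo, rfl⟩)
      rw [hmeas]
      have hae : ∀ i, AEMeasurable (U i) μ := by
        intro i
        by_contra h
        have h1 := hUunif i
        rw [Measure.map_of_not_aemeasurable h] at h1
        have h2 := congrArg (fun m : Measure ℝ => m Set.univ) h1
        simp [Measure.restrict_apply_univ, Real.volume_Ico] at h2
      have hIoo : ∀ i : Fin n, Set.Ioo (a i) (b i) ⊆ Set.Ico (0:ℝ) 1 := by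
        intro i x hx
        have hi1 : ((i:ℕ):ℝ) + 1 ≤ (n:ℝ) := by
          have := i.isLt
          have : ((i:ℕ):ℝ) + 1 ≤ (n:ℝ) := by exact_mod_cast this
          exact this
        have hp1 : (2:ℝ) ≤ 2^((i:ℕ)+1) := by
          calc (2:ℝ) = 2^1 := (pow_one 2).symm
          _ ≤ 2^((i:ℕ)+1) := pow_le_pow_right₀ one_le_two (by omega)
        have hp2 : (2:ℝ)^((i:ℕ)+1) ≤ 2^n := pow_le_pow_right₀ one_le_two (by exact_mod_cast i.isLt)
        have h2nβ : (2:ℝ)^n * β = 1 := by rw [hβdef]; field_simp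
        have hai : 0 ≤ a i := by
          simp only [ha]
          nlinarith
        have hbi : b i < 1 := by
          simp only [hb]
          nlinarith
        exact ⟨le_trans hai hx.1.le, lt_trans hx.2 hbi⟩
      have hval : ∀ i : Fin n, μ ((U i)⁻¹' (Set.Ioo (a i) (b i))) = ENNReal.ofReal (η/2) := by
        intro i
        rw [← Measure.map_apply_of_aemeasurable (hae i) measurableSet_Ioo, hUunif i,
          Measure.restrict_apply measurableSet_Ioo, Set.inter_eq_left.mpr (hIoo i),
          Real.volume_Ioo]
        congr 1
        simp only [ha, hb]; ring
      rw [Finset.prod_congr rfl (fun i _ => hval i), Finset.prod_const]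
      apply ENNReal.pow_pos
      exact ENNReal.ofReal_pos.mpr (by positivity)
end

section
/- Let B, W, A be nonnegative random variables with B having distribution function F_B and an approximating distribution F̃_B with ‖F_B - F̃_B‖_∞ = ε. Let F_W and F̃_W denote the stationary distributions solving W =_d max{0, B - A - W} under F_B and F̃_B respectively. If P(B > A) < 1, then ‖F_W - F̃_W‖_∞ ≤ ε/(1 - P(B > A)). -/
open MeasureTheory ProbabilityTheory Set
open scoped ENNReal

lemma aux_iUnion_Iic (t : ℝ) : (⋃ n : ℕ, Iic (t - 1/(n+1))) = Iio t := by
  ext y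
  simp only [mem_iUnion, mem_Iic, mem_Iio]
  constructor
  · rintro ⟨n, hn⟩
    have h : (0:ℝ) < 1/((n:ℝ)+1) := by positivity
    linarith
  · intro hy
    obtain ⟨n, hn⟩ := exists_nat_one_div_lt (sub_pos.mpr hy)
    exact ⟨n, by linarith⟩

lemma aux_Iio_le (π π' : Measure ℝ) [IsProbabilityMeasure π'] (D : ℝ≥0∞)
    (h : ∀ s : ℝ, π (Iic s) ≤ π' (Iic s) + D) (t : ℝ) :
    π (Iio t) ≤ π' (Iio t) + D := by
  have hmono : Monotone (fun n : ℕ => Iic (t - 1/((n:ℝ)+1))) := by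
    intro m n hmn
    apply Iic_subset_Iic.mpr
    have h1 : (1:ℝ)/((n:ℝ)+1) ≤ 1/((m:ℝ)+1) := by
      apply one_div_le_one_div_of_le (by positivity)
      have : (m:ℝ) ≤ n := Nat.cast_le.mpr hmn
      linarith
    linarith
  have h1 : π (Iio t) = ⨆ n : ℕ, π (Iic (t - 1/((n:ℝ)+1))) := by
    rw [← aux_iUnion_Iic t]
    exact hmono.directed_le.measure_iUnion
  rw [h1]
  refine iSup_le fun n => (h _).trans ?_
  refine add_le_add_left (measure_mono (Iic_subset_Iio.mpr ?_)) D
  have h2 : (0:ℝ) < 1/((n:ℝ)+1) := by positivity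
  linarith

lemma aux_Ici_one (π : Measure ℝ) [IsProbabilityMeasure π] (hnull : π (Iio 0) = 0)
    {t : ℝ} (ht : t ≤ 0) : π (Ici t) = 1 := by
  have h0 : π (Iio t) = 0 := measure_mono_null (Iio_subset_Iio ht) hnull
  refine le_antisymm prob_le_one ?_
  calc (1:ℝ≥0∞) = π (Iio t ∪ Ici t) := by rw [Iio_union_Ici, measure_univ]
    _ ≤ π (Iio t) + π (Ici t) := measure_union_le _ _
    _ = π (Ici t) := by rw [h0, zero_add]

lemma aux_Ici_le (π π' : Measure ℝ) [IsProbabilityMeasure π] [IsProbabilityMeasure π']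
    (D : ℝ≥0∞)
    (h : ∀ s : ℝ, π' (Iic s) ≤ π (Iic s) + D) (t : ℝ) :
    π (Ici t) ≤ π' (Ici t) + D := by
  have hIio : π' (Iio t) ≤ π (Iio t) + D := aux_Iio_le π' π D h t
  have h1 : π (Iio t) + π (Ici t) = 1 := by
    rw [← measure_union (Iio_disjoint_Ici le_rfl) measurableSet_Ici, Iio_union_Ici,
      measure_univ]
  have h1' : π' (Iio t) + π' (Ici t) = 1 := by
    rw [← measure_union (Iio_disjoint_Ici le_rfl) measurableSet_Ici, Iio_union_Ici,
      measure_univ]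
  have h2 : π (Ici t) + π' (Iio t) ≤ (π' (Ici t) + D) + π' (Iio t) := by
    calc π (Ici t) + π' (Iio t) ≤ π (Ici t) + (π (Iio t) + D) := add_le_add_right hIio _
      _ = (π (Iio t) + π (Ici t)) + D := by ring
      _ = 1 + D := by rw [h1]
      _ = (π' (Iio t) + π' (Ici t)) + D := by rw [h1']
      _ = (π' (Ici t) + D) + π' (Iio t) := by ring
  exact (ENNReal.add_le_add_iff_right (measure_ne_top π' _)).mp h2

lemma aux_swap (μ π : Measure ℝ) [IsProbabilityMeasure μ] [IsProbabilityMeasure π] (c : ℝ) :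
    ∫⁻ b, π (Ici (b - c)) ∂μ = ∫⁻ w, μ (Iic (c + w)) ∂π := by
  have hS : MeasurableSet {q : ℝ × ℝ | q.1 - c ≤ q.2} :=
    measurableSet_le (by fun_prop) (by fun_prop)
  calc ∫⁻ b, π (Ici (b - c)) ∂μ
      = ∫⁻ b, π (Prod.mk b ⁻¹' {q : ℝ × ℝ | q.1 - c ≤ q.2}) ∂μ := rfl
    _ = (μ.prod π) {q : ℝ × ℝ | q.1 - c ≤ q.2} := (Measure.prod_apply hS).symm
    _ = ∫⁻ w, μ ((fun b => (b, w)) ⁻¹' {q : ℝ × ℝ | q.1 - c ≤ q.2}) ∂π :=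
        Measure.prod_apply_symm hS
    _ = ∫⁻ w, μ (Iic (c + w)) ∂π := by
        refine lintegral_congr fun w => ?_
        congr 1
        ext b
        simp only [mem_preimage, mem_setOf_eq, mem_Iic]
        constructor <;> intro <;> linarith

lemma aux_repr (αm μ π : Measure ℝ) [IsProbabilityMeasure αm] [IsProbabilityMeasure μ]
    [IsProbabilityMeasure π]
    (hfix : π = Measure.map (fun p : ℝ × ℝ × ℝ => max 0 (p.2.1 - p.1 - p.2.2))
      (αm.prod (μ.prod π)))
    {x : ℝ} (hx : 0 ≤ x) :
    π (Iic x) = ∫⁻ a, ∫⁻ b, π (Ici (b - a - x)) ∂μ ∂αm := by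
  have hf : Measurable (fun p : ℝ × ℝ × ℝ => max 0 (p.2.1 - p.1 - p.2.2)) := by fun_prop
  conv_lhs => rw [hfix]
  rw [Measure.map_apply hf measurableSet_Iic]
  have hpre : (fun p : ℝ × ℝ × ℝ => max 0 (p.2.1 - p.1 - p.2.2)) ⁻¹' Iic x
      = {p : ℝ × ℝ × ℝ | p.2.1 - p.1 - p.2.2 ≤ x} := by
    ext p
    simp [max_le_iff, hx]
  rw [hpre]
  have hS : MeasurableSet {p : ℝ × ℝ × ℝ | p.2.1 - p.1 - p.2.2 ≤ x} :=
    measurableSet_le (by fun_prop) (by fun_prop)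
  rw [Measure.prod_apply hS]
  refine lintegral_congr fun a => ?_
  have hSa : MeasurableSet {q : ℝ × ℝ | q.1 - a - q.2 ≤ x} :=
    measurableSet_le (by fun_prop) (by fun_prop)
  have hpa : Prod.mk a ⁻¹' {p : ℝ × ℝ × ℝ | p.2.1 - p.1 - p.2.2 ≤ x}
      = {q : ℝ × ℝ | q.1 - a - q.2 ≤ x} := rfl
  rw [hpa, Measure.prod_apply hSa]
  refine lintegral_congr fun b => ?_
  congr 1
  ext w
  simp only [mem_preimage, mem_setOf_eq, mem_Ici]
  constructor <;> intro <;> linarith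

lemma aux_step1 (αm ν π₁ π₂ : Measure ℝ) [IsProbabilityMeasure αm] [IsProbabilityMeasure ν]
    [IsProbabilityMeasure π₁] [IsProbabilityMeasure π₂] (D : ℝ≥0∞) (hD : D ≠ ⊤)
    (hpt : ∀ t : ℝ, π₁ (Ici t) ≤ π₂ (Ici t) + D)
    (h₁ : π₁ (Iio 0) = 0) (h₂ : π₂ (Iio 0) = 0)
    {x : ℝ} (hx : 0 ≤ x) :
    ∫⁻ a, ∫⁻ b, π₁ (Ici (b - a - x)) ∂ν ∂αm ≤
      (∫⁻ a, ∫⁻ b, π₂ (Ici (b - a - x)) ∂ν ∂αm)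
        + D * (αm.prod ν) {p : ℝ × ℝ | p.1 < p.2} := by
  have key : ∀ a b : ℝ, π₁ (Ici (b - a - x)) ≤
      π₂ (Ici (b - a - x)) + (Ioi (a + x)).indicator (fun _ => D) b := by
    intro a b
    by_cases h : b ∈ Ioi (a + x)
    · rw [indicator_of_mem h]
      exact hpt _
    · rw [indicator_of_notMem h]
      have hb : b ≤ a + x := not_lt.mp h
      rw [aux_Ici_one π₁ h₁ (by linarith), aux_Ici_one π₂ h₂ (by linarith)]
      simp
  have hU : MeasurableSet {p : ℝ × ℝ | p.1 + x < p.2} :=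
    measurableSet_lt (by fun_prop) (by fun_prop)
  have hmeas : Measurable fun a : ℝ => D * ν (Ioi (a + x)) := by
    have := (measurable_measure_prodMk_left (ν := ν) hU).const_mul D
    exact this
  calc ∫⁻ a, ∫⁻ b, π₁ (Ici (b - a - x)) ∂ν ∂αm
      ≤ ∫⁻ a, ∫⁻ b, (π₂ (Ici (b - a - x))
          + (Ioi (a + x)).indicator (fun _ => D) b) ∂ν ∂αm :=
        lintegral_mono fun a => lintegral_mono fun b => key a b
    _ = ∫⁻ a, ((∫⁻ b, π₂ (Ici (b - a - x)) ∂ν) + D * ν (Ioi (a + x))) ∂αm := by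
        refine lintegral_congr fun a => ?_
        rw [lintegral_add_right _ (measurable_const.indicator measurableSet_Ioi),
          lintegral_indicator measurableSet_Ioi, setLIntegral_const]
    _ = (∫⁻ a, ∫⁻ b, π₂ (Ici (b - a - x)) ∂ν ∂αm) + ∫⁻ a, D * ν (Ioi (a + x)) ∂αm :=
        lintegral_add_right _ hmeas
    _ = (∫⁻ a, ∫⁻ b, π₂ (Ici (b - a - x)) ∂ν ∂αm)
        + D * (αm.prod ν) {p : ℝ × ℝ | p.1 + x < p.2} := by
        rw [Measure.prod_apply hU, lintegral_const_mul' D _ hD]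
        rfl
    _ ≤ (∫⁻ a, ∫⁻ b, π₂ (Ici (b - a - x)) ∂ν ∂αm)
        + D * (αm.prod ν) {p : ℝ × ℝ | p.1 < p.2} := by
        refine add_le_add_right (mul_le_mul_right (measure_mono ?_) D) _
        intro p hp
        simp only [mem_setOf_eq] at hp ⊢
        linarith

lemma aux_step2 (αm μ₁ μ₂ π : Measure ℝ) [IsProbabilityMeasure αm] [IsProbabilityMeasure μ₁]
    [IsProbabilityMeasure μ₂] [IsProbabilityMeasure π] (E : ℝ≥0∞)
    (hpt : ∀ s : ℝ, μ₁ (Iic s) ≤ μ₂ (Iic s) + E) (x : ℝ) :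
    ∫⁻ a, ∫⁻ b, π (Ici (b - a - x)) ∂μ₁ ∂αm ≤
      (∫⁻ a, ∫⁻ b, π (Ici (b - a - x)) ∂μ₂ ∂αm) + E := by
  calc ∫⁻ a, ∫⁻ b, π (Ici (b - a - x)) ∂μ₁ ∂αm
      = ∫⁻ a, ∫⁻ w, μ₁ (Iic ((a + x) + w)) ∂π ∂αm := by
        refine lintegral_congr fun a => ?_
        simp only [sub_sub]
        exact aux_swap μ₁ π (a + x)
    _ ≤ ∫⁻ a, ∫⁻ w, (μ₂ (Iic ((a + x) + w)) + E) ∂π ∂αm :=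
        lintegral_mono fun a => lintegral_mono fun w => hpt _
    _ = ∫⁻ a, ((∫⁻ w, μ₂ (Iic ((a + x) + w)) ∂π) + E) ∂αm := by
        refine lintegral_congr fun a => ?_
        rw [lintegral_add_right _ measurable_const, lintegral_const, measure_univ, mul_one]
    _ = (∫⁻ a, ∫⁻ w, μ₂ (Iic ((a + x) + w)) ∂π ∂αm) + E := by
        rw [lintegral_add_right _ measurable_const, lintegral_const, measure_univ, mul_one]
    _ = (∫⁻ a, ∫⁻ b, π (Ici (b - a - x)) ∂μ₂ ∂αm) + E := by
        congr 1
        refine lintegral_congr fun a => ?_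
        rw [← aux_swap μ₂ π (a + x)]
        refine lintegral_congr fun b => ?_
        rw [sub_sub]

lemma aux_nonneg_null (P : Measure (ℝ × ℝ × ℝ)) :
    (Measure.map (fun p : ℝ × ℝ × ℝ => max 0 (p.2.1 - p.1 - p.2.2)) P) (Iio 0) = 0 := by
  have hf : Measurable (fun p : ℝ × ℝ × ℝ => max 0 (p.2.1 - p.1 - p.2.2)) := by fun_prop
  rw [Measure.map_apply hf measurableSet_Iio]
  have : (fun p : ℝ × ℝ × ℝ => max 0 (p.2.1 - p.1 - p.2.2)) ⁻¹' Iio 0 = ∅ := by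
    ext p
    simp only [mem_preimage, mem_Iio, mem_empty_iff_false, iff_false, not_lt]
    exact le_max_left _ _
  rw [this, measure_empty]

/-- Error bound for the stationary distribution of `W =_d max{0, B - A - W}`: if the
distribution of the rotation time `B` is replaced by an approximation whose distribution
function is uniformly within `ε`, and `P(B > A) < 1`, then the distribution functions of the
corresponding stationary waiting times are uniformly within `ε / (1 - P(B > A))`. Here `α`,
`ν`, `ν'` are the laws of `A`, `B`, `B̃`, and `πW`, `πW'` the corresponding stationary laws
of `W`, all independent on the right-hand side. -/
theorem stationary_waiting_time_error_bound
    (α ν ν' πW πW' : Measure ℝ)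
    [IsProbabilityMeasure α] [IsProbabilityMeasure ν] [IsProbabilityMeasure ν']
    [IsProbabilityMeasure πW] [IsProbabilityMeasure πW']
    (hfix : πW = Measure.map (fun p : ℝ × ℝ × ℝ => max 0 (p.2.1 - p.1 - p.2.2))
      (α.prod (ν.prod πW)))
    (hfix' : πW' = Measure.map (fun p : ℝ × ℝ × ℝ => max 0 (p.2.1 - p.1 - p.2.2))
      (α.prod (ν'.prod πW')))
    (ε : ℝ) (hε : ∀ x : ℝ, |cdf ν x - cdf ν' x| ≤ ε)
    (hBA : (α.prod ν) {p : ℝ × ℝ | p.1 < p.2} < 1) :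
    ∀ x : ℝ, |cdf πW x - cdf πW' x| ≤
      ε / (1 - ((α.prod ν) {p : ℝ × ℝ | p.1 < p.2}).toReal) := by
  intro x
  set R : ℝ≥0∞ := (α.prod ν) {p : ℝ × ℝ | p.1 < p.2} with hR
  set ρ : ℝ := R.toReal with hρdef
  have hRne : R ≠ ⊤ := measure_ne_top _ _
  have hρ1 : ρ < 1 := by
    rw [hρdef, ← ENNReal.toReal_one]
    exact (ENNReal.toReal_lt_toReal hRne (by simp)).mpr hBA
  have hρ0 : 0 ≤ ρ := ENNReal.toReal_nonneg
  have hε0 : 0 ≤ ε := le_trans (abs_nonneg _) (hε 0)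
  set g : ℝ → ℝ := fun y => |cdf πW y - cdf πW' y| with hg
  have hbdd : BddAbove (Set.range g) := by
    refine ⟨2, ?_⟩
    rintro _ ⟨y, rfl⟩
    have h1 := cdf_nonneg (μ := πW) (x := y)
    have h2 := cdf_le_one (μ := πW) (x := y)
    have h3 := cdf_nonneg (μ := πW') (x := y)
    have h4 := cdf_le_one (μ := πW') (x := y)
    simp only [hg]
    rw [abs_le]
    constructor <;> linarith
  set d : ℝ := sSup (Set.range g) with hd
  have hled : ∀ y, g y ≤ d := fun y => le_csSup hbdd ⟨y, rfl⟩
  have hd0 : 0 ≤ d := le_trans (abs_nonneg _) (hled 0)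
  have hofReal : ∀ (μ : Measure ℝ), ∀ [IsProbabilityMeasure μ], ∀ s : ℝ,
      μ (Iic s) = ENNReal.ofReal (cdf μ s) := by
    intro μ _ s
    rw [cdf_eq_real, measureReal_def, ENNReal.ofReal_toReal (measure_ne_top _ _)]
  have hIic : ∀ s : ℝ, πW (Iic s) ≤ πW' (Iic s) + ENNReal.ofReal d := by
    intro s
    have := (abs_le.mp (hled s)).2
    rw [hofReal πW s, hofReal πW' s, ← ENNReal.ofReal_add (cdf_nonneg _ _) hd0]
    exact ENNReal.ofReal_le_ofReal (by linarith)
  have hIic' : ∀ s : ℝ, πW' (Iic s) ≤ πW (Iic s) + ENNReal.ofReal d := by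
    intro s
    have := (abs_le.mp (hled s)).1
    rw [hofReal πW s, hofReal πW' s, ← ENNReal.ofReal_add (cdf_nonneg _ _) hd0]
    exact ENNReal.ofReal_le_ofReal (by linarith)
  have hνIic : ∀ s : ℝ, ν (Iic s) ≤ ν' (Iic s) + ENNReal.ofReal ε := by
    intro s
    have := (abs_le.mp (hε s)).2
    rw [hofReal ν s, hofReal ν' s, ← ENNReal.ofReal_add (cdf_nonneg _ _) hε0]
    exact ENNReal.ofReal_le_ofReal (by linarith)
  have hνIic' : ∀ s : ℝ, ν' (Iic s) ≤ ν (Iic s) + ENNReal.ofReal ε := by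
    intro s
    have := (abs_le.mp (hε s)).1
    rw [hofReal ν s, hofReal ν' s, ← ENNReal.ofReal_add (cdf_nonneg _ _) hε0]
    exact ENNReal.ofReal_le_ofReal (by linarith)
  have hnull : πW (Iio 0) = 0 := by rw [hfix]; exact aux_nonneg_null _
  have hnull' : πW' (Iio 0) = 0 := by rw [hfix']; exact aux_nonneg_null _
  have hIci : ∀ t : ℝ, πW (Ici t) ≤ πW' (Ici t) + ENNReal.ofReal d :=
    aux_Ici_le πW πW' _ hIic'
  have hIci' : ∀ t : ℝ, πW' (Ici t) ≤ πW (Ici t) + ENNReal.ofReal d :=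
    aux_Ici_le πW' πW _ hIic
  have hmain : ∀ y : ℝ, g y ≤ ε + d * ρ := by
    intro y
    rcases lt_or_ge y 0 with hy | hy
    · have h1 : cdf πW y = 0 := by
        rw [cdf_eq_real, measureReal_def, measure_mono_null (Iic_subset_Iio.mpr hy) hnull]
        simp
      have h2 : cdf πW' y = 0 := by
        rw [cdf_eq_real, measureReal_def, measure_mono_null (Iic_subset_Iio.mpr hy) hnull']
        simp
      simp only [hg, h1, h2, sub_zero, abs_zero]
      positivity
    · set K : ℝ≥0∞ := ENNReal.ofReal ε + ENNReal.ofReal d * R with hK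
      have hKne : K ≠ ⊤ :=
        ENNReal.add_ne_top.mpr ⟨ENNReal.ofReal_ne_top,
          ENNReal.mul_ne_top ENNReal.ofReal_ne_top hRne⟩
      have hKto : K.toReal = ε + d * ρ := by
        rw [hK, ENNReal.toReal_add ENNReal.ofReal_ne_top
          (ENNReal.mul_ne_top ENNReal.ofReal_ne_top hRne), ENNReal.toReal_mul,
          ENNReal.toReal_ofReal hε0, ENNReal.toReal_ofReal hd0, hρdef]
      have e1 : πW (Iic y) ≤ πW' (Iic y) + K := by
        calc πW (Iic y) = ∫⁻ a, ∫⁻ b, πW (Ici (b - a - y)) ∂ν ∂α := aux_repr α ν πW hfix hy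
          _ ≤ (∫⁻ a, ∫⁻ b, πW' (Ici (b - a - y)) ∂ν ∂α) + ENNReal.ofReal d * R :=
            aux_step1 α ν πW πW' _ ENNReal.ofReal_ne_top hIci hnull hnull' hy
          _ ≤ ((∫⁻ a, ∫⁻ b, πW' (Ici (b - a - y)) ∂ν' ∂α) + ENNReal.ofReal ε)
              + ENNReal.ofReal d * R :=
            add_le_add_left (aux_step2 α ν ν' πW' _ hνIic y) _
          _ = πW' (Iic y) + K := by
            rw [← aux_repr α ν' πW' hfix' hy, hK]
            ring
      have e2 : πW' (Iic y) ≤ πW (Iic y) + K := by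
        calc πW' (Iic y) = ∫⁻ a, ∫⁻ b, πW' (Ici (b - a - y)) ∂ν' ∂α :=
            aux_repr α ν' πW' hfix' hy
          _ ≤ (∫⁻ a, ∫⁻ b, πW' (Ici (b - a - y)) ∂ν ∂α) + ENNReal.ofReal ε :=
            aux_step2 α ν' ν πW' _ hνIic' y
          _ ≤ ((∫⁻ a, ∫⁻ b, πW (Ici (b - a - y)) ∂ν ∂α) + ENNReal.ofReal d * R)
              + ENNReal.ofReal ε :=
            add_le_add_left
              (aux_step1 α ν πW' πW _ ENNReal.ofReal_ne_top hIci' hnull' hnull hy) _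
          _ = πW (Iic y) + K := by
            rw [← aux_repr α ν πW hfix hy, hK]
            ring
      have f1 : cdf πW y ≤ cdf πW' y + (ε + d * ρ) := by
        have := ENNReal.toReal_mono
          (ENNReal.add_ne_top.mpr ⟨measure_ne_top _ _, hKne⟩) e1
        rw [ENNReal.toReal_add (measure_ne_top _ _) hKne, hKto] at this
        rw [cdf_eq_real, cdf_eq_real, measureReal_def, measureReal_def]
        exact this
      have f2 : cdf πW' y ≤ cdf πW y + (ε + d * ρ) := by
        have := ENNReal.toReal_mono
          (ENNReal.add_ne_top.mpr ⟨measure_ne_top _ _, hKne⟩) e2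
        rw [ENNReal.toReal_add (measure_ne_top _ _) hKne, hKto] at this
        rw [cdf_eq_real, cdf_eq_real, measureReal_def, measureReal_def]
        exact this
      simp only [hg]
      rw [abs_le]
      constructor <;> linarith
  have hdle : d ≤ ε + d * ρ := by
    rw [hd]
    exact csSup_le (Set.range_nonempty g) (by rintro _ ⟨y, rfl⟩; exact hmain y)
  have hmul : d * (1 - ρ) ≤ ε := by nlinarith
  have hfin : d ≤ ε / (1 - ρ) := (le_div_iff₀ (by linarith)).mpr hmul
  exact (hled x).trans hfin
end

section
/- Let W_A and W_NA denote the stationary waiting times of the picker in the alternating two-carousel model and the non-alternating (machine-repair) model respectively, under identical distributional assumptions for pick and rotation times. Then for every i, the partial sums satisfy Σ_{j=1}^i W^A_j ≥_{st} Σ_{j=1}^i W^{NA}_j, even though W^A and W^{NA} themselves are not stochastically ordered. -/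
open MeasureTheory ProbabilityTheory

/-- Waiting times of the picker in the alternating two-carousel model:
`W_0 = A_0 = 0` and `W_{n+1} = max{0, B_{n+1} - A_n - W_n}`. -/
noncomputable def waitAlt (a b : ℕ → ℝ) : ℕ → ℝ
  | 0 => 0
  | n + 1 => max 0 (b (n + 1) - (if n = 0 then 0 else a n) - waitAlt a b n)

/-- State of the non-alternating (machine-repair) two-carousel model after the `n`-th pick:
`(t, r₁, r₂)` where `t` is the completion time of the `n`-th pick and `r₁, r₂` are the times
at which the items currently rotating on the two carousels become available. The picker
serves whichever carousel is ready first; the served carousel immediately starts rotating a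
new order with the next unused rotation time. -/
noncomputable def naState (a b : ℕ → ℝ) : ℕ → ℝ × ℝ × ℝ
  | 0 => (0, b 1, b 2)
  | n + 1 =>
    let s := naState a b n
    let t' := max s.1 (min s.2.1 s.2.2) + a (n + 1)
    (t', max s.2.1 s.2.2, t' + b (n + 3))

/-- Waiting times of the picker (repairman) in the non-alternating machine-repair model. -/
noncomputable def waitNA (a b : ℕ → ℝ) : ℕ → ℝ
  | 0 => 0
  | n + 1 =>
    max 0 (min (naState a b n).2.1 (naState a b n).2.2 - (naState a b n).1)

/-- Completion-times pair `(T_{n-1}, T_n)` in the alternating model, with `T_{-1} = 0`. -/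
noncomputable def altT (a b : ℕ → ℝ) : ℕ → ℝ × ℝ
  | 0 => (0, 0)
  | n + 1 =>
    ((altT a b n).2, max (altT a b n).2 ((altT a b n).1 + b (n + 1)) + a (n + 1))

lemma altT_succ (a b : ℕ → ℝ) (n : ℕ) :
    altT a b (n + 1) =
      ((altT a b n).2, max (altT a b n).2 ((altT a b n).1 + b (n + 1)) + a (n + 1)) := rfl

lemma naState_succ (a b : ℕ → ℝ) (n : ℕ) :
    naState a b (n + 1) =
      (max (naState a b n).1 (min (naState a b n).2.1 (naState a b n).2.2) + a (n + 1),
        max (naState a b n).2.1 (naState a b n).2.2,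
        max (naState a b n).1 (min (naState a b n).2.1 (naState a b n).2.2) + a (n + 1)
          + b (n + 3)) := rfl

lemma max0sub (c d : ℝ) : max 0 (c - d) = max d c - d := by
  rw [← max_sub_sub_right, sub_self]

lemma waitAlt_eq (a b : ℕ → ℝ) :
    ∀ n, waitAlt a b (n + 1) = (altT a b (n + 1)).2 - (altT a b n).2 - a (n + 1) := by
  intro n
  induction n with
  | zero =>
      show max 0 (b 1 - (if (0:ℕ) = 0 then (0:ℝ) else a 0) - waitAlt a b 0) = _
      simp only [if_pos rfl, altT_succ, altT, waitAlt]
      ring_nf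
      simp
  | succ n ih =>
      show max 0 (b (n + 2) - (if n + 1 = 0 then (0:ℝ) else a (n + 1)) - waitAlt a b (n + 1))
        = _
      rw [if_neg (Nat.succ_ne_zero n), ih]
      have h1 : b (n + 2) - a (n + 1) -
          ((altT a b (n + 1)).2 - (altT a b n).2 - a (n + 1))
          = ((altT a b n).2 + b (n + 2)) - (altT a b (n + 1)).2 := by ring
      rw [h1, max0sub]
      rw [altT_succ a b (n + 1)]
      have h2 : (altT a b (n + 1)).1 = (altT a b n).2 := rfl
      rw [h2]
      ring_nf

lemma waitNA_eq (a b : ℕ → ℝ) (n : ℕ) :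
    waitNA a b (n + 1) = (naState a b (n + 1)).1 - (naState a b n).1 - a (n + 1) := by
  show max 0 (min (naState a b n).2.1 (naState a b n).2.2 - (naState a b n).1) = _
  rw [max0sub, naState_succ]
  ring

lemma sumAlt (a b : ℕ → ℝ) :
    ∀ i, ∑ j ∈ Finset.Icc 1 i, waitAlt a b j
      = (altT a b i).2 - ∑ j ∈ Finset.Icc 1 i, a j := by
  intro i
  induction i with
  | zero => simp [altT]
  | succ i ih =>
      rw [Finset.sum_Icc_succ_top (Nat.succ_le_succ (Nat.zero_le i)),
        Finset.sum_Icc_succ_top (Nat.succ_le_succ (Nat.zero_le i)), ih, waitAlt_eq]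
      ring

lemma sumNA (a b : ℕ → ℝ) :
    ∀ i, ∑ j ∈ Finset.Icc 1 i, waitNA a b j
      = (naState a b i).1 - ∑ j ∈ Finset.Icc 1 i, a j := by
  intro i
  induction i with
  | zero => simp [naState]
  | succ i ih =>
      rw [Finset.sum_Icc_succ_top (Nat.succ_le_succ (Nat.zero_le i)),
        Finset.sum_Icc_succ_top (Nat.succ_le_succ (Nat.zero_le i)), ih, waitNA_eq]
      ring

lemma na_le_alt (a b : ℕ → ℝ) (ha : ∀ n, 0 ≤ a n) (hb : ∀ n, 0 ≤ b n) :
    ∀ n, (naState a b n).1 ≤ (altT a b n).2 ∧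
      min (naState a b n).2.1 (naState a b n).2.2
        ≤ max (altT a b n).2 ((altT a b n).1 + b (n + 1)) ∧
      max (naState a b n).2.1 (naState a b n).2.2
        ≤ max (max (altT a b n).2 ((altT a b n).1 + b (n + 1)))
            ((altT a b n).2 + b (n + 2)) := by
  intro n
  induction n with
  | zero =>
      refine ⟨le_refl _, ?_, ?_⟩
      · calc min (naState a b 0).2.1 (naState a b 0).2.2 ≤ (naState a b 0).2.1 :=
            min_le_left _ _
          _ = b 1 := rfl
          _ = (altT a b 0).1 + b 1 := by simp [altT]
          _ ≤ _ := le_max_right _ _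
      · apply max_le
        · calc (naState a b 0).2.1 = b 1 := rfl
            _ = (altT a b 0).1 + b 1 := by simp [altT]
            _ ≤ max (altT a b 0).2 ((altT a b 0).1 + b 1) := le_max_right _ _
            _ ≤ _ := le_max_left _ _
        · calc (naState a b 0).2.2 = b 2 := rfl
            _ = (altT a b 0).2 + b 2 := by simp [altT]
            _ ≤ _ := le_max_right _ _
  | succ n ih =>
      obtain ⟨h1, h2, h3⟩ := ih
      set T := (altT a b n).2 with hT
      set P := (altT a b n).1 with hP
      set M1 := max T (P + b (n + 1)) with hM1
      have hTP : (altT a b (n + 1)).1 = T := rfl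
      have hT' : (altT a b (n + 1)).2 = M1 + a (n + 1) := rfl
      have hM1T' : M1 ≤ (altT a b (n + 1)).2 := by
        rw [hT']; linarith [ha (n + 1)]
      have htle : max (naState a b n).1
          (min (naState a b n).2.1 (naState a b n).2.2) ≤ M1 := by
        apply max_le (h1.trans (le_max_left _ _)) h2
      have g1 : (naState a b (n + 1)).1 ≤ (altT a b (n + 1)).2 := by
        rw [naState_succ, hT']
        simp only
        linarith
      refine ⟨g1, ?_, ?_⟩
      · rw [naState_succ, hTP]
        simp only
        calc min (max (naState a b n).2.1 (naState a b n).2.2) _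
            ≤ max (naState a b n).2.1 (naState a b n).2.2 := min_le_left _ _
          _ ≤ max M1 (T + b (n + 2)) := h3
          _ ≤ max (altT a b (n + 1)).2 (T + b (n + 2)) :=
              max_le_max hM1T' le_rfl
      · rw [naState_succ, hTP, hT']
        simp only
        apply max_le
        · calc max (naState a b n).2.1 (naState a b n).2.2
              ≤ max M1 (T + b (n + 2)) := h3
            _ ≤ max (M1 + a (n + 1)) (T + b (n + 2)) := by
                apply max_le_max _ le_rfl; linarith [ha (n + 1)]
            _ ≤ _ := le_max_left _ _
        · have : max (naState a b n).1
              (min (naState a b n).2.1 (naState a b n).2.2) + a (n + 1) + b (n + 3)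
              ≤ M1 + a (n + 1) + b (n + 3) := by linarith
          exact this.trans (le_max_right _ _)

lemma sum_na_le_sum_alt (a b : ℕ → ℝ) (ha : ∀ n, 0 ≤ a n) (hb : ∀ n, 0 ≤ b n) (i : ℕ) :
    ∑ j ∈ Finset.Icc 1 i, waitNA a b j ≤ ∑ j ∈ Finset.Icc 1 i, waitAlt a b j := by
  rw [sumAlt, sumNA]
  have := (na_le_alt a b ha hb i).1
  linarith

/-- Under identical distributional assumptions for the i.i.d. pick times `A` and i.i.d.
rotation times `B`, the partial sums of the picker's waiting times in the alternating
two-carousel model stochastically dominate those in the non-alternating (machine-repair)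
model: for every `i`, `∑_{j=1}^i W^A_j ≥_st ∑_{j=1}^i W^{NA}_j`. -/
theorem partial_sums_waiting_times_st_ordered
    {Ω : Type*} [MeasurableSpace Ω] (μ : Measure Ω) [IsProbabilityMeasure μ]
    (A B : ℕ → Ω → ℝ) (hA : ∀ n ω, 0 ≤ A n ω) (hB : ∀ n ω, 0 ≤ B n ω)
    (hAiid : iIndepFun A μ ∧
      ∀ i j, IdentDistrib (A i) (A j) μ μ)
    (hBiid : iIndepFun B μ ∧
      ∀ i j, IdentDistrib (B i) (B j) μ μ)
    (hAB : IndepFun (fun ω (n : ℕ) => A n ω) (fun ω (n : ℕ) => B n ω) μ) :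
    ∀ (i : ℕ) (x : ℝ),
      μ {ω | x < ∑ j ∈ Finset.Icc 1 i, waitNA (fun n => A n ω) (fun n => B n ω) j} ≤
      μ {ω | x < ∑ j ∈ Finset.Icc 1 i, waitAlt (fun n => A n ω) (fun n => B n ω) j} := by
  intro i x
  apply measure_mono
  intro ω hω
  exact lt_of_lt_of_le hω
    (sum_na_le_sum_alt _ _ (fun n => hA n ω) (fun n => hB n ω) i)
end

section
/- In the shortest (optimal) route collecting n items on a circular carousel, the picker changes direction at most once under the open-loop strategy. -/
/-- Length of one leg of a route on the unit-circumference circle: from `p` to `x`,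
clockwise (increasing coordinate) if `dir = true`, counterclockwise otherwise. -/
noncomputable def legLen (p x : ℝ) (dir : Bool) : ℝ :=
  if dir then Int.fract (x - p) else Int.fract (p - x)

/-- Total length of a route, given as a list of (next point, direction) legs, starting
from `p`. -/
noncomputable def routeLen (p : ℝ) : List (ℝ × Bool) → ℝ
  | [] => 0
  | (x, dir) :: rest => legLen p x dir + routeLen x rest

noncomputable def pathLen : List ℝ → ℝ
  | [] => 0
  | [_] => 0
  | a :: b :: t => |b - a| + pathLen (b :: t)

noncomputable def maxL : List ℝ → ℝ
  | [] => 0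
  | [a] => a
  | a :: b :: t => max a (maxL (b :: t))

noncomputable def minL : List ℝ → ℝ
  | [] => 0
  | [a] => a
  | a :: b :: t => min a (minL (b :: t))

lemma minL_le_head (a : ℝ) (t : List ℝ) : minL (a :: t) ≤ a := by
  cases t with
  | nil => simp [minL]
  | cons b t => simp only [minL]; exact min_le_left _ _

lemma head_le_maxL (a : ℝ) (t : List ℝ) : a ≤ maxL (a :: t) := by
  cases t with
  | nil => simp [maxL]
  | cons b t => simp only [maxL]; exact le_max_left _ _

lemma pathLen_ge (a : ℝ) (t : List ℝ) :
    min (2 * (maxL (a :: t) - a) + (a - minL (a :: t)))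
        ((maxL (a :: t) - a) + 2 * (a - minL (a :: t))) ≤ pathLen (a :: t) := by
  induction t generalizing a with
  | nil => simp [pathLen, maxL, minL]
  | cons b t ih =>
    have hM' := head_le_maxL b t
    have hm' := minL_le_head b t
    have h7 : b - a ≤ |b - a| := le_abs_self _
    have h8 : a - b ≤ |b - a| := by rw [abs_sub_comm]; exact le_abs_self _
    specialize ih b
    simp only [pathLen, maxL, minL]
    rcases min_choice (2 * (maxL (b :: t) - b) + (b - minL (b :: t)))
        ((maxL (b :: t) - b) + 2 * (b - minL (b :: t))) with he | he <;>
      rw [he] at ih <;>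
      rcases max_cases a (maxL (b :: t)) with ⟨h1, h2⟩ | ⟨h1, h2⟩ <;>
      rcases min_cases a (minL (b :: t)) with ⟨h3, h4⟩ | ⟨h3, h4⟩ <;>
      rw [h1, h3, min_le_iff] <;>
      first
        | exact Or.inl (by linarith)
        | exact Or.inr (by linarith)

noncomputable def nextPt (p x : ℝ) (dir : Bool) : ℝ :=
  if dir then p + Int.fract (x - p) else p - Int.fract (p - x)

lemma nextPt_true (p x : ℝ) : nextPt p x true = p + Int.fract (x - p) := rfl
lemma nextPt_false (p x : ℝ) : nextPt p x false = p - Int.fract (p - x) := rfl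
lemma legLen_true (p x : ℝ) : legLen p x true = Int.fract (x - p) := rfl
lemma legLen_false (p x : ℝ) : legLen p x false = Int.fract (p - x) := rfl

noncomputable def lifts (p : ℝ) : List (ℝ × Bool) → List ℝ
  | [] => []
  | (x, dir) :: rest => nextPt p x dir :: lifts (nextPt p x dir) rest

lemma fract_nextPt (p x : ℝ) (dir : Bool) : Int.fract (nextPt p x dir) = Int.fract x := by
  cases dir
  · rw [nextPt_false, show p - Int.fract (p - x) = x + (⌊p - x⌋ : ℝ) by unfold Int.fract; ring,
      ← Int.fract_add_intCast x ⌊p - x⌋]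
  · rw [nextPt_true, show p + Int.fract (x - p) = x - (⌊x - p⌋ : ℝ) by unfold Int.fract; ring,
      ← Int.fract_sub_intCast x ⌊x - p⌋]

lemma legLen_congr {p q : ℝ} (h : Int.fract p = Int.fract q) (x : ℝ) (dir : Bool) :
    legLen p x dir = legLen q x dir := by
  obtain ⟨z, hz⟩ : ∃ z : ℤ, p - q = z := by
    refine ⟨⌊p⌋ - ⌊q⌋, ?_⟩
    have h1 : p - ⌊p⌋ = q - ⌊q⌋ := h
    push_cast; linarith
  cases dir
  · rw [legLen_false, legLen_false, show p - x = q - x + z by linarith, Int.fract_add_intCast]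
  · rw [legLen_true, legLen_true, show x - p = x - q - z by linarith, Int.fract_sub_intCast]

lemma routeLen_congr {p q : ℝ} (h : Int.fract p = Int.fract q) (l : List (ℝ × Bool)) :
    routeLen p l = routeLen q l := by
  cases l with
  | nil => rfl
  | cons hd tl =>
    obtain ⟨x, dir⟩ := hd
    simp only [routeLen, legLen_congr h]

lemma abs_nextPt (p x : ℝ) (dir : Bool) : |nextPt p x dir - p| = legLen p x dir := by
  cases dir
  · rw [nextPt_false, legLen_false, show p - Int.fract (p - x) - p = -Int.fract (p - x) by ring,
      abs_neg, abs_of_nonneg (Int.fract_nonneg _)]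
  · rw [nextPt_true, legLen_true, show p + Int.fract (x - p) - p = Int.fract (x - p) by ring,
      abs_of_nonneg (Int.fract_nonneg _)]

lemma routeLen_eq_pathLen (l : List (ℝ × Bool)) : ∀ p, routeLen p l = pathLen (p :: lifts p l) := by
  induction l with
  | nil => intro p; simp [routeLen, lifts, pathLen]
  | cons hd tl ih =>
    intro p
    obtain ⟨x, dir⟩ := hd
    simp only [routeLen, lifts, pathLen]
    rw [abs_nextPt, ← routeLen_congr (fract_nextPt p x dir) tl, ih]

lemma lifts_cover (l : List (ℝ × Bool)) : ∀ p, ∀ pr ∈ l, ∃ y ∈ lifts p l, Int.fract y = Int.fract pr.1 := by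
  induction l with
  | nil => intro p pr h; simp at h
  | cons hd tl ih =>
    intro p pr h
    obtain ⟨x, dir⟩ := hd
    rcases List.mem_cons.1 h with rfl | h2
    · exact ⟨nextPt p x dir, List.mem_cons_self, fract_nextPt p x dir⟩
    · obtain ⟨y, hy, hfy⟩ := ih (nextPt p x dir) pr h2
      exact ⟨y, List.mem_cons_of_mem _ hy, hfy⟩


lemma fract_of_Ico {x : ℝ} (h0 : 0 ≤ x) (h1 : x < 1) : Int.fract x = x :=
  Int.fract_eq_self.2 ⟨h0, h1⟩

lemma fract_of_neg {x : ℝ} (h0 : -1 ≤ x) (h1 : x < 0) : Int.fract x = x + 1 := by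
  rw [← Int.fract_add_intCast x 1, Int.fract_eq_self.2 ⟨by push_cast; linarith, by push_cast; linarith⟩]
  push_cast; ring

lemma routeLen_cw_le (c : ℝ) (xs : List ℝ) : ∀ p, p ≤ c → c - p < 1 →
    List.Chain (· ≤ ·) p xs → (∀ x ∈ xs, x ≤ c) →
    routeLen p (xs.map (fun x => (x, true))) ≤ c - p := by
  induction xs with
  | nil => intro p h1 h2 _ _; simp only [List.map_nil, routeLen]; linarith
  | cons x t ih =>
    intro p h1 h2 hch hub
    rcases List.chain_cons.1 hch with ⟨hpx, hch'⟩
    have hxc : x ≤ c := hub x (List.mem_cons_self)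
    simp only [List.map_cons, routeLen, legLen_true]
    rw [fract_of_Ico (by linarith) (by linarith)]
    have := ih x hxc (by linarith) hch' (fun y hy => hub y (List.mem_cons_of_mem _ hy))
    linarith

lemma routeLen_ccw_le (c : ℝ) (xs : List ℝ) : ∀ p, c ≤ p → p - c < 1 →
    List.Chain (· ≥ ·) p xs → (∀ x ∈ xs, c ≤ x) →
    routeLen p (xs.map (fun x => (x, false))) ≤ p - c := by
  induction xs with
  | nil => intro p h1 h2 _ _; simp only [List.map_nil, routeLen]; linarith
  | cons x t ih =>
    intro p h1 h2 hch hub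
    rcases List.chain_cons.1 hch with ⟨hpx, hch'⟩
    have hxc : c ≤ x := hub x (List.mem_cons_self)
    simp only [List.map_cons, routeLen, legLen_false]
    rw [fract_of_Ico (by linarith) (by linarith)]
    have := ih x hxc (by linarith) hch' (fun y hy => hub y (List.mem_cons_of_mem _ hy))
    linarith

noncomputable def endPt (p : ℝ) : List (ℝ × Bool) → ℝ
  | [] => p
  | (x, _) :: rest => endPt x rest

lemma endPt_mem (l : List (ℝ × Bool)) : ∀ p, endPt p l = p ∨ ∃ pr ∈ l, pr.1 = endPt p l := by
  induction l with
  | nil => intro p; left; rfl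
  | cons hd tl ih =>
    intro p
    obtain ⟨x, b⟩ := hd
    rcases ih x with h | ⟨pr, h1, h2⟩
    · right; refine ⟨(x, b), List.mem_cons_self, ?_⟩
      show x = endPt x tl; exact h.symm
    · right; exact ⟨pr, List.mem_cons_of_mem _ h1, h2⟩

lemma routeLen_append (l₁ l₂ : List (ℝ × Bool)) : ∀ p,
    routeLen p (l₁ ++ l₂) = routeLen p l₁ + routeLen (endPt p l₁) l₂ := by
  induction l₁ with
  | nil => intro p; simp [routeLen, endPt]
  | cons hd tl ih =>
    intro p
    obtain ⟨x, b⟩ := hd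
    simp only [List.cons_append, routeLen, endPt, ih x]
    ring

lemma countTurns_replicate (k : ℕ) (b : Bool) : countTurns (List.replicate k b) = 0 := by
  induction k with
  | zero => rfl
  | succ k ih =>
    cases k with
    | zero => rfl
    | succ m => simpa [List.replicate, countTurns] using ih

lemma countTurns_le_one (a k : ℕ) (b c : Bool) :
    countTurns (List.replicate a b ++ List.replicate k c) ≤ 1 := by
  induction a with
  | zero => simp [countTurns_replicate]
  | succ a ih =>
    cases a with
    | zero =>
      cases k with
      | zero => simp [countTurns]
      | succ m =>
        simp only [List.replicate, List.singleton_append, countTurns, countTurns_replicate]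
        split <;>
          simp [show countTurns (c :: List.replicate m c) = 0 from countTurns_replicate (m+1) c]
    | succ a2 =>
      simp only [List.replicate, List.cons_append, countTurns] at ih ⊢
      simpa using ih


lemma ofFn_cast {α : Type*} {m n : ℕ} (h : m = n) (f : Fin m → α) :
    List.ofFn (fun k : Fin n => f (Fin.cast h.symm k)) = List.ofFn f := by
  subst h; rfl

lemma ofFn_pair {α β : Type*} (l₁ l₂ : List α) (g : α → β) (b₁ b₂ : Bool) :
    List.ofFn (fun j : Fin (l₁ ++ l₂).length =>
        (g ((l₁ ++ l₂).get j), if (j : ℕ) < l₁.length then b₁ else b₂)) =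
      l₁.map (fun a => (g a, b₁)) ++ l₂.map (fun a => (g a, b₂)) := by
  apply List.ext_getElem
  · simp
  · intro i h1 h2
    simp only [List.getElem_ofFn, List.get_eq_getElem, List.getElem_append,
      List.getElem_map, List.length_map]
    by_cases hi : i < l₁.length <;> simp [hi]

lemma ofFn_if_lt (n c : ℕ) (b₁ b₂ : Bool) :
    (List.ofFn fun k : Fin n => if (k : ℕ) < c then b₁ else b₂) =
      List.replicate (min c n) b₁ ++ List.replicate (n - min c n) b₂ := by
  apply List.ext_getElem
  · simp
  · intro i h1 h2
    simp only [List.length_ofFn] at h1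
    simp only [List.getElem_ofFn, List.getElem_append, List.length_replicate,
      List.getElem_replicate]
    by_cases hi : i < min c n
    · rw [dif_pos hi, if_pos (by omega)]
    · rw [dif_neg hi, if_neg (by omega)]


lemma routeLen_wrap_ccw_le (cm q : ℝ) (ys : List ℝ) (hq0 : 0 ≤ q) (hcmq : cm ≤ q)
    (hm1 : (-1:ℝ) < cm)
    (hlb : ∀ y ∈ ys, 1 + cm ≤ y) (hub : ∀ y ∈ ys, y < 1) (hqlt : ∀ y ∈ ys, q < y)
    (hpw : List.Pairwise (· ≥ ·) ys) :
    routeLen q (ys.map (fun x => (x, false))) ≤ q - cm := by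
  haveI : IsTrans ℝ (· ≥ ·) := ⟨fun a b c h1 h2 => le_trans h2 h1⟩
  cases ys with
  | nil => simp only [List.map_nil, routeLen]; linarith
  | cons z t =>
    simp only [List.map_cons, routeLen, legLen_false]
    have hz1 : z < 1 := hub z (List.mem_cons_self)
    have hzq : q < z := hqlt z (List.mem_cons_self)
    have hzlb : 1 + cm ≤ z := hlb z (List.mem_cons_self)
    rw [fract_of_neg (by linarith) (by linarith)]
    have hch : List.Chain (· ≥ ·) z t := (by have := List.Pairwise.isChain hpw; exact this)
    have := routeLen_ccw_le (1 + cm) t z (by linarith) (by linarith) hch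
      (fun y hy => hlb y (List.mem_cons_of_mem _ hy))
    linarith

lemma routeLen_wrap_cw_le (cM q : ℝ) (ys : List ℝ) (hq1 : q < 1) (h0M : 0 ≤ cM) (hM1 : cM < 1)
    (hlb : ∀ y ∈ ys, 0 ≤ y) (hub : ∀ y ∈ ys, y ≤ cM) (hqgt : ∀ y ∈ ys, y < q)
    (hpw : List.Pairwise (· ≤ ·) ys) :
    routeLen q (ys.map (fun x => (x, true))) ≤ cM + 1 - q := by
  cases ys with
  | nil => simp only [List.map_nil, routeLen]; linarith
  | cons z t =>
    simp only [List.map_cons, routeLen, legLen_true]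
    have hz0 : 0 ≤ z := hlb z (List.mem_cons_self)
    have hzq : z < q := hqgt z (List.mem_cons_self)
    have hzub : z ≤ cM := hub z (List.mem_cons_self)
    rw [fract_of_neg (by linarith) (by linarith)]
    have hch : List.Chain (· ≤ ·) z t := (by have := List.Pairwise.isChain hpw; exact this)
    have := routeLen_cw_le cM t z hzub (by linarith) hch
      (fun y hy => hub y (List.mem_cons_of_mem _ hy))
    linarith

lemma perm_of_lists {n : ℕ} (u : Fin n → ℝ) (l₁ l₂ : List (Fin n)) (hnd : (l₁ ++ l₂).Nodup)
    (hlen : (l₁ ++ l₂).length = n) (b₁ b₂ : Bool) :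
    ∃ (σ' : Equiv.Perm (Fin n)) (d' : Fin n → Bool),
      List.ofFn d' =
        List.replicate (min l₁.length n) b₁ ++ List.replicate (n - min l₁.length n) b₂ ∧
      List.ofFn (fun k => (u (σ' k), d' k)) =
        l₁.map (fun i => (u i, b₁)) ++ l₂.map (fun i => (u i, b₂)) := by
  have hinj : Function.Injective (fun k : Fin n => (l₁ ++ l₂).get (Fin.cast hlen.symm k)) := by
    intro a b hab
    have := List.nodup_iff_injective_get.1 hnd hab
    simpa [Fin.ext_iff] using this
  have hbij := Finite.injective_iff_bijective.1 hinj
  refine ⟨Equiv.ofBijective _ hbij, fun k => if (k : ℕ) < l₁.length then b₁ else b₂, ?_, ?_⟩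
  · rw [ofFn_if_lt]
  · have he : (fun k : Fin n => (u ((Equiv.ofBijective _ hbij) k),
        if (k : ℕ) < l₁.length then b₁ else b₂))
        = fun k : Fin n => (fun j : Fin (l₁ ++ l₂).length =>
            (u ((l₁ ++ l₂).get j), if (j : ℕ) < l₁.length then b₁ else b₂))
          (Fin.cast hlen.symm k) := rfl
    rw [he]
    exact (ofFn_cast hlen (fun j : Fin (l₁ ++ l₂).length =>
      (u ((l₁ ++ l₂).get j), if (j : ℕ) < l₁.length then b₁ else b₂))).trans
      (ofFn_pair l₁ l₂ u b₁ b₂)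

lemma construct1 {n : ℕ} (u : Fin n → ℝ) (hu : Function.Injective u)
    (hmem : ∀ i, u i ∈ Set.Ico (0:ℝ) 1)
    (A : Finset (Fin n)) (cM cm K : ℝ)
    (hA : ∀ i ∈ A, u i ≤ cM) (hB : ∀ i, i ∉ A → 1 + cm ≤ u i)
    (h0M : 0 ≤ cM) (hM1 : cM < 1) (hm1 : (-1:ℝ) < cm) (hm0 : cm ≤ 0)
    (hlt : cM - cm < 1)
    (hK1 : cM ≤ K) (hK2 : ∀ i : Fin n, i ∉ A → 2 * cM - cm ≤ K) :
    ∃ (σ' : Equiv.Perm (Fin n)) (d' : Fin n → Bool),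
      countTurns (List.ofFn d') ≤ 1 ∧
      routeLen 0 (List.ofFn (fun k => (u (σ' k), d' k))) ≤ K := by
  classical
  let r : Fin n → Fin n → Prop := fun i j => u i ≤ u j
  haveI : DecidableRel r := fun i j => Classical.dec _
  haveI : IsTrans (Fin n) r := ⟨fun a b c h1 h2 => le_trans h1 h2⟩
  haveI : IsAntisymm (Fin n) r := ⟨fun a b h1 h2 => hu (le_antisymm h1 h2)⟩
  haveI : IsTotal (Fin n) r := ⟨fun a b => le_total (u a) (u b)⟩
  set l₁ := A.sort r with hl₁
  set l₂ := (Aᶜ.sort r).reverse with hl₂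
  have hmem₁ : ∀ i ∈ l₁, i ∈ A := fun i hi => (Finset.mem_sort r).1 hi
  have hmem₂ : ∀ i ∈ l₂, i ∉ A := fun i hi => by
    simpa using (Finset.mem_sort r).1 (List.mem_reverse.1 hi)
  have hnd : (l₁ ++ l₂).Nodup := by
    rw [List.nodup_append]
    exact ⟨Finset.sort_nodup _ _, List.nodup_reverse.2 (Finset.sort_nodup _ _),
      fun a ha b hb hab => by subst hab; exact (hmem₂ a hb) (hmem₁ a ha)⟩
  have hlen : (l₁ ++ l₂).length = n := by
    rw [List.length_append, hl₁, hl₂, List.length_reverse, Finset.length_sort,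
      Finset.length_sort, Finset.card_add_card_compl, Fintype.card_fin]
  obtain ⟨σ', d', hofd, hof⟩ := perm_of_lists u l₁ l₂ hnd hlen true false
  refine ⟨σ', d', ?_, ?_⟩
  · rw [hofd]; exact countTurns_le_one _ _ _ _
  · rw [hof]
    have hpw₁ : List.Pairwise (· ≤ ·) (l₁.map u) :=
      List.pairwise_map.2 (Finset.pairwise_sort A r)
    have hpw₂ : List.Pairwise (· ≥ ·) (l₂.map u) := by
      rw [hl₂, List.map_reverse, List.pairwise_reverse]
      exact List.pairwise_map.2 (Finset.pairwise_sort Aᶜ r)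
    have hmapeq₁ : l₁.map (fun i => (u i, true)) = (l₁.map u).map (fun x => (x, true)) := by
      rw [List.map_map]; rfl
    have hmapeq₂ : l₂.map (fun i => (u i, false)) = (l₂.map u).map (fun x => (x, false)) := by
      rw [List.map_map]; rfl
    rw [hmapeq₁, hmapeq₂, routeLen_append]
    have hub₁ : ∀ x ∈ l₁.map u, x ≤ cM := by
      intro x hx
      obtain ⟨i, hi, rfl⟩ := List.mem_map.1 hx
      exact hA i (hmem₁ i hi)
    have h1le : routeLen 0 ((l₁.map u).map (fun x => (x, true))) ≤ cM - 0 := by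
      refine routeLen_cw_le cM (l₁.map u) 0 h0M (by linarith) ?_ hub₁
      refine (List.Pairwise.isChain (List.pairwise_cons.2 ⟨?_, hpw₁⟩) : List.IsChain _ _)
      intro x hx
      obtain ⟨i, hi, rfl⟩ := List.mem_map.1 hx
      exact (hmem i).1
    set q := endPt 0 ((l₁.map u).map fun x => (x, true)) with hqdef
    have hq : 0 ≤ q ∧ q ≤ cM := by
      rcases endPt_mem ((l₁.map u).map fun x => (x, true)) 0 with h | ⟨pr, hpr, he⟩
      · rw [← hqdef] at h; rw [h]; exact ⟨le_refl _, h0M⟩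
      · rw [← hqdef] at he
        obtain ⟨x, hx, rfl⟩ := List.mem_map.1 hpr
        obtain ⟨i, hi, rfl⟩ := List.mem_map.1 hx
        simp only at he
        rw [← he]
        exact ⟨(hmem i).1, hA i (hmem₁ i hi)⟩
    rcases hl2c : l₂.map u with _ | ⟨z, t⟩
    · simp only [List.map_nil, routeLen]
      linarith [h1le, hK1]
    · have hne₂ : ∃ i₀, i₀ ∈ l₂ := by
        rcases l₂ with _ | ⟨i₀, t₀⟩
        · simp at hl2c
        · exact ⟨i₀, List.mem_cons_self⟩
      obtain ⟨i₀, hi₀⟩ := hne₂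
      have hK := hK2 i₀ (hmem₂ i₀ hi₀)
      have hlb₂ : ∀ y ∈ l₂.map u, 1 + cm ≤ y := by
        intro y hy
        obtain ⟨i, hi, rfl⟩ := List.mem_map.1 hy
        exact hB i (hmem₂ i hi)
      have hub₂ : ∀ y ∈ l₂.map u, y < 1 := by
        intro y hy
        obtain ⟨i, hi, rfl⟩ := List.mem_map.1 hy
        exact (hmem i).2
      have h2le : routeLen q ((l₂.map u).map (fun x => (x, false))) ≤ q - cm := by
        refine routeLen_wrap_ccw_le cm q (l₂.map u) hq.1 (by linarith [hq.1]) hm1 hlb₂ hub₂ ?_ hpw₂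
        intro y hy
        have := hlb₂ y hy
        linarith [hq.2]
      rw [hl2c] at h2le
      linarith [h1le, h2le, hq.2]

lemma construct2 {n : ℕ} (u : Fin n → ℝ) (hu : Function.Injective u)
    (hmem : ∀ i, u i ∈ Set.Ico (0:ℝ) 1)
    (A : Finset (Fin n)) (cM cm : ℝ)
    (hA : ∀ i ∈ A, u i ≤ cM) (hB : ∀ i, i ∉ A → 1 + cm ≤ u i)
    (h0M : 0 ≤ cM) (hM1 : cM < 1) (hm1 : (-1:ℝ) < cm) (hm0 : cm ≤ 0)
    (hlt : cM - cm < 1) :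
    ∃ (σ' : Equiv.Perm (Fin n)) (d' : Fin n → Bool),
      countTurns (List.ofFn d') ≤ 1 ∧
      routeLen 0 (List.ofFn (fun k => (u (σ' k), d' k))) ≤ cM - 2 * cm := by
  classical
  let r : Fin n → Fin n → Prop := fun i j => u i ≤ u j
  haveI : DecidableRel r := fun i j => Classical.dec _
  haveI : IsTrans (Fin n) r := ⟨fun a b c h1 h2 => le_trans h1 h2⟩
  haveI : IsAntisymm (Fin n) r := ⟨fun a b h1 h2 => hu (le_antisymm h1 h2)⟩
  haveI : IsTotal (Fin n) r := ⟨fun a b => le_total (u a) (u b)⟩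
  set l₁ := (Aᶜ.sort r).reverse with hl₁
  set l₂ := A.sort r with hl₂
  have hmem₂ : ∀ i ∈ l₂, i ∈ A := fun i hi => (Finset.mem_sort r).1 hi
  have hmem₁ : ∀ i ∈ l₁, i ∉ A := fun i hi => by
    simpa using (Finset.mem_sort r).1 (List.mem_reverse.1 hi)
  have hnd : (l₁ ++ l₂).Nodup := by
    rw [List.nodup_append]
    exact ⟨List.nodup_reverse.2 (Finset.sort_nodup _ _), Finset.sort_nodup _ _,
      fun a ha b hb hab => by subst hab; exact (hmem₁ a ha) (hmem₂ a hb)⟩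
  have hlen : (l₁ ++ l₂).length = n := by
    rw [List.length_append, hl₁, hl₂, List.length_reverse, Finset.length_sort,
      Finset.length_sort, add_comm, Finset.card_add_card_compl, Fintype.card_fin]
  obtain ⟨σ', d', hofd, hof⟩ := perm_of_lists u l₁ l₂ hnd hlen false true
  refine ⟨σ', d', ?_, ?_⟩
  · rw [hofd]; exact countTurns_le_one _ _ _ _
  · rw [hof]
    have hpw₂ : List.Pairwise (· ≤ ·) (l₂.map u) :=
      List.pairwise_map.2 (Finset.pairwise_sort A r)
    have hpw₁ : List.Pairwise (· ≥ ·) (l₁.map u) := by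
      rw [hl₁, List.map_reverse, List.pairwise_reverse]
      exact List.pairwise_map.2 (Finset.pairwise_sort Aᶜ r)
    have hmapeq₁ : l₁.map (fun i => (u i, false)) = (l₁.map u).map (fun x => (x, false)) := by
      rw [List.map_map]; rfl
    have hmapeq₂ : l₂.map (fun i => (u i, true)) = (l₂.map u).map (fun x => (x, true)) := by
      rw [List.map_map]; rfl
    rw [hmapeq₁, hmapeq₂, routeLen_append]
    have hlb₁ : ∀ y ∈ l₁.map u, 1 + cm ≤ y := by
      intro y hy
      obtain ⟨i, hi, rfl⟩ := List.mem_map.1 hy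
      exact hB i (hmem₁ i hi)
    have hub₁ : ∀ y ∈ l₁.map u, y < 1 := by
      intro y hy
      obtain ⟨i, hi, rfl⟩ := List.mem_map.1 hy
      exact (hmem i).2
    have h1le : routeLen 0 ((l₁.map u).map (fun x => (x, false))) ≤ 0 - cm := by
      refine routeLen_wrap_ccw_le cm 0 (l₁.map u) (le_refl _) hm0 hm1 hlb₁ hub₁ ?_ hpw₁
      intro y hy
      have := hlb₁ y hy
      linarith
    set q := endPt 0 ((l₁.map u).map fun x => (x, false)) with hqdef
    have hq : q = 0 ∨ (1 + cm ≤ q ∧ q < 1) := by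
      rcases endPt_mem ((l₁.map u).map fun x => (x, false)) 0 with h | ⟨pr, hpr, he⟩
      · rw [← hqdef] at h; exact Or.inl h
      · rw [← hqdef] at he
        obtain ⟨x, hx, rfl⟩ := List.mem_map.1 hpr
        obtain ⟨i, hi, rfl⟩ := List.mem_map.1 hx
        simp only at he
        rw [← he]
        exact Or.inr ⟨hB i (hmem₁ i hi), (hmem i).2⟩
    have hub₂ : ∀ x ∈ l₂.map u, x ≤ cM := by
      intro x hx
      obtain ⟨i, hi, rfl⟩ := List.mem_map.1 hx
      exact hA i (hmem₂ i hi)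
    have hlb₂ : ∀ x ∈ l₂.map u, 0 ≤ x := by
      intro x hx
      obtain ⟨i, hi, rfl⟩ := List.mem_map.1 hx
      exact (hmem i).1
    have h2le : routeLen q ((l₂.map u).map (fun x => (x, true))) ≤ cM - 2 * cm - (0 - cm) := by
      rcases hq with h | ⟨h1, h2⟩
      · rw [h]
        have := routeLen_cw_le cM (l₂.map u) 0 h0M (by linarith)
          (List.Pairwise.isChain (List.pairwise_cons.2 ⟨fun x hx => hlb₂ x hx, hpw₂⟩) : List.IsChain _ _) hub₂
        linarith
      · have := routeLen_wrap_cw_le cM q (l₂.map u) h2 h0M hM1 hlb₂ hub₂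
          (fun y hy => by have := hub₂ y hy; linarith) hpw₂
        linarith
    linarith [h1le, h2le]

lemma minL_le_of_mem {y a : ℝ} {t : List ℝ} (h : y ∈ a :: t) : minL (a :: t) ≤ y := by
  induction t generalizing a with
  | nil => simp_all [minL]
  | cons b t ih =>
    rcases List.mem_cons.1 h with rfl | h2
    · exact minL_le_head _ _
    · simp only [minL]; exact le_trans (min_le_right _ _) (ih h2)

lemma le_maxL_of_mem {y a : ℝ} {t : List ℝ} (h : y ∈ a :: t) : y ≤ maxL (a :: t) := by
  induction t generalizing a with
  | nil => simp_all [maxL]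
  | cons b t ih =>
    rcases List.mem_cons.1 h with rfl | h2
    · exact head_le_maxL _ _
    · simp only [maxL]; exact le_trans (ih h2) (le_max_right _ _)


/-- On a circular carousel (circumference 1, picker starting at `0`, items at distinct
positions `u i ∈ [0,1)`), for every route visiting all items (a visiting order `σ` together
with a direction choice for each leg) there is a route changing direction at most once that
is at least as short. Hence the shortest (open-loop) route changes direction at most once,
and the optimal travel time is the minimum over the routes with at most one turn. -/
theorem optimal_route_at_most_one_turn
    (n : ℕ) (u : Fin n → ℝ) (hu : Function.Injective u)
    (hmem : ∀ i, u i ∈ Set.Ico (0 : ℝ) 1) (hne : ∀ i, u i ≠ 0) :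
    ∀ (σ : Equiv.Perm (Fin n)) (d : Fin n → Bool),
      ∃ (σ' : Equiv.Perm (Fin n)) (d' : Fin n → Bool),
        countTurns (List.ofFn d') ≤ 1 ∧
        routeLen 0 (List.ofFn (fun k => (u (σ' k), d' k))) ≤
          routeLen 0 (List.ofFn (fun k => (u (σ k), d k))) := by
  classical
  intro σ d
  rcases Nat.eq_zero_or_pos n with rfl | hpos
  · refine ⟨σ, d, ?_, le_refl _⟩
    rw [List.ofFn_zero]
    simp [countTurns]
  set L₀ := List.ofFn (fun k => (u (σ k), d k)) with hL₀
  obtain ⟨ys, hys⟩ : ∃ ys, lifts 0 L₀ = ys := ⟨_, rfl⟩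
  obtain ⟨M, hM⟩ : ∃ M, maxL (0 :: ys) = M := ⟨_, rfl⟩
  obtain ⟨m, hm⟩ : ∃ m, minL (0 :: ys) = m := ⟨_, rfl⟩
  have hM0 : (0:ℝ) ≤ M := hM ▸ head_le_maxL 0 ys
  have hm0 : m ≤ 0 := hm ▸ minL_le_head 0 ys
  have hlow : min (2*M - m) (M - 2*m) ≤ routeLen 0 L₀ := by
    have h := pathLen_ge 0 ys
    rw [hM, hm] at h
    have e1 : 2 * (M - 0) + (0 - m) = 2*M - m := by ring
    have e2 : (M - 0) + 2 * (0 - m) = M - 2*m := by ring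
    rw [e1, e2] at h
    rw [routeLen_eq_pathLen, hys]
    exact h
  have hc : ∀ i : Fin n, ∃ y ∈ 0 :: ys, Int.fract y = u i := by
    intro i
    have hmemL : ((u i, d (σ.symm i)) : ℝ × Bool) ∈ L₀ := by
      rw [hL₀]
      refine List.mem_ofFn.2 ⟨σ.symm i, ?_⟩
      simp [Equiv.apply_symm_apply]
    obtain ⟨y, hy, hfy⟩ := lifts_cover L₀ 0 _ hmemL
    refine ⟨y, List.mem_cons_of_mem _ (hys ▸ hy), ?_⟩
    rw [hfy]
    exact fract_of_Ico (hmem i).1 (hmem i).2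
  by_cases hcase : M - m < 1
  · have hM1 : M < 1 := by linarith
    have hm1 : (-1:ℝ) < m := by linarith
    have hdi : ∀ i : Fin n, u i ≤ M ∨ 1 + m ≤ u i := by
      intro i
      obtain ⟨y, hy, hfy⟩ := hc i
      have hym : m ≤ y := hm ▸ minL_le_of_mem hy
      have hyM : y ≤ M := hM ▸ le_maxL_of_mem hy
      have hui0 := (hmem i).1
      have hui1 := (hmem i).2
      have hb1 : ((⌊y⌋ : ℤ) : ℝ) = y - u i := by
        rw [← hfy]; unfold Int.fract; ring
      have h4 : (-2:ℤ) < ⌊y⌋ := by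
        have : (-2:ℝ) < ((⌊y⌋ : ℤ) : ℝ) := by rw [hb1]; linarith
        exact_mod_cast this
      have h5 : ⌊y⌋ < 1 := by
        have : ((⌊y⌋ : ℤ) : ℝ) < 1 := by rw [hb1]; linarith
        exact_mod_cast this
      have h6 : ⌊y⌋ = -1 ∨ ⌊y⌋ = 0 := by omega
      rcases h6 with h | h
      · right
        have : ((⌊y⌋ : ℤ) : ℝ) = -1 := by exact_mod_cast h
        rw [this] at hb1
        linarith
      · left
        have : ((⌊y⌋ : ℤ) : ℝ) = 0 := by exact_mod_cast h
        rw [this] at hb1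
        linarith
    have hAmem : ∀ i ∈ Finset.univ.filter (fun i => u i ≤ M), u i ≤ M :=
      fun i hi => (Finset.mem_filter.1 hi).2
    have hBmem : ∀ i, i ∉ Finset.univ.filter (fun i => u i ≤ M) → 1 + m ≤ u i := by
      intro i hi
      rcases hdi i with h | h
      · exact absurd (Finset.mem_filter.2 ⟨Finset.mem_univ i, h⟩) hi
      · exact h
    by_cases hside : M ≤ -m
    · have hmin : min (2*M - m) (M - 2*m) = 2*M - m := min_eq_left (by linarith)
      rw [hmin] at hlow
      exact construct1 u hu hmem _ M m (routeLen 0 L₀) hAmem hBmem hM0 hM1 hm1 hm0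
        (by linarith) (by linarith) (fun i _ => by linarith)
    · have hmin : min (2*M - m) (M - 2*m) = M - 2*m := min_eq_right (by linarith)
      rw [hmin] at hlow
      obtain ⟨σ', d', h1, h2⟩ := construct2 u hu hmem _ M m hAmem hBmem hM0 hM1 hm1 hm0
        (by linarith)
      exact ⟨σ', d', h1, le_trans h2 hlow⟩
  · push_neg at hcase
    have hone : (1:ℝ) ≤ min (2*M - m) (M - 2*m) := le_min (by linarith) (by linarith)
    haveI : Nonempty (Fin n) := Fin.pos_iff_nonempty.1 hpos
    obtain ⟨i0, -, hi0⟩ := Finset.exists_max_image Finset.univ u Finset.univ_nonempty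
    exact construct1 u hu hmem Finset.univ (u i0) 0 (routeLen 0 L₀)
      (fun i _ => hi0 i (Finset.mem_univ i)) (fun i hi => absurd (Finset.mem_univ i) hi)
      (hmem i0).1 (hmem i0).2 (by norm_num) (le_refl _) (by linarith [(hmem i0).2])
      (by linarith [(hmem i0).2, hone, hlow]) (fun i hi => absurd (Finset.mem_univ i) hi)
end
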